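/- arXiv:0804.1082 — 4 statements merged into one kernel-verified Lean document; each statement's English description precedes it below -/
import Mathlib

section
/- For a bisimplicial set X, the collection Tot_n X = {(x_n,…,x_0) ∈ ∏_{q=n}^{0} X_{q,n−q} : x_q d^h_q = x_{q−1} d^v_0 for all q ∈ [1,n]}, with action (x_q)_q · Tot_θ X = (x_{pθ} X_{Spl_p(θ)})_{p=m,…,0} for monotone θ : [m] → [n], defines a simplicial set (the total simplicial set of Artin–Mazur). -/
namespace Paper

/-- clamped coface map `δ^k : [a] → [b]`. -/
def δOH (k a b : ℕ) : Fin (a+1) →o Fin (b+1) where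
  toFun i := ⟨min (if (i:ℕ) < k then (i:ℕ) else (i:ℕ)+1) b, Nat.lt_succ_of_le (Nat.min_le_right _ _)⟩
  monotone' := by
    intro i j hij
    have h : (i:ℕ) ≤ (j:ℕ) := hij
    simp only [Fin.mk_le_mk]
    split_ifs <;> omega

/-- clamped codegeneracy map `σ^k : [a] → [b]`. -/
def σOH (k a b : ℕ) : Fin (a+1) →o Fin (b+1) where
  toFun i := ⟨min (if (i:ℕ) ≤ k then (i:ℕ) else (i:ℕ)-1) b, Nat.lt_succ_of_le (Nat.min_le_right _ _)⟩
  monotone' := by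
    intro i j hij
    have h : (i:ℕ) ≤ (j:ℕ) := hij
    simp only [Fin.mk_le_mk]
    split_ifs <;> omega

/-- `τ^k : [n] → [1]`, sending `[0, n-k]` to `0` and the rest to `1`. -/
def τOH (n k : ℕ) : Fin (n+1) →o Fin 2 where
  toFun i := if (i:ℕ) + k ≤ n then 0 else 1
  monotone' := by
    intro i j hij
    have h : (i:ℕ) ≤ (j:ℕ) := hij
    dsimp only
    split_ifs with h1 h2 h3
    · exact le_refl _
    · exact Fin.zero_le _
    · exact absurd h3 (by omega)
    · exact le_refl _

/-- application of `θ : [m] → [n]` to a natural number (clamped). -/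
def fApp {m n : ℕ} (θ : Fin (m+1) →o Fin (n+1)) (x : ℕ) : ℕ :=
  (θ ⟨min x m, Nat.lt_succ_of_le (Nat.min_le_right _ _)⟩ : Fin (n+1))

theorem fApp_mono {m n : ℕ} (θ : Fin (m+1) →o Fin (n+1)) {x y : ℕ} (h : x ≤ y) :
    fApp θ x ≤ fApp θ y :=
  Fin.le_def.mp (θ.monotone (Fin.mk_le_mk.mpr (by omega)))

theorem fApp_le {m n : ℕ} (θ : Fin (m+1) →o Fin (n+1)) (x : ℕ) : fApp θ x ≤ n :=
  Nat.lt_succ_iff.mp (Fin.isLt _)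

theorem fApp_coe {m n : ℕ} (θ : Fin (m+1) →o Fin (n+1)) (p : Fin (m+1)) :
    fApp θ (p:ℕ) = (θ p : ℕ) := by
  have hp : (⟨min (p:ℕ) m, Nat.lt_succ_of_le (Nat.min_le_right _ _)⟩ : Fin (m+1)) = p :=
    Fin.ext (show min (p:ℕ) m = (p:ℕ) from by have := p.isLt; omega)
  unfold fApp
  rw [hp]

/-- `Spl_{≤ p}(θ) : [p] → [pθ]`. -/
def splLe {m n : ℕ} (θ : Fin (m+1) →o Fin (n+1)) (p : Fin (m+1)) :
    Fin ((p:ℕ)+1) →o Fin ((θ p : ℕ)+1) where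
  toFun i := ⟨fApp θ (i:ℕ), by
    have h1 : fApp θ (i:ℕ) ≤ fApp θ (p:ℕ) := fApp_mono θ (by have := i.isLt; omega)
    have h2 : fApp θ (p:ℕ) = (θ p : ℕ) := fApp_coe θ p
    omega⟩
  monotone' := by
    intro a b hab
    have h : (a:ℕ) ≤ (b:ℕ) := hab
    simp only [Fin.mk_le_mk]
    exact fApp_mono θ h

/-- `Spl_{≥ p}(θ) : [m-p] → [n-pθ]`. -/
def splGe {m n : ℕ} (θ : Fin (m+1) →o Fin (n+1)) (p : Fin (m+1)) :
    Fin (m - (p:ℕ) + 1) →o Fin (n - (θ p : ℕ) + 1) where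
  toFun i := ⟨fApp θ ((i:ℕ) + (p:ℕ)) - (θ p : ℕ), by
    have h1 : fApp θ ((i:ℕ) + (p:ℕ)) ≤ n := fApp_le θ _
    omega⟩
  monotone' := by
    intro a b hab
    have h : (a:ℕ) ≤ (b:ℕ) := hab
    simp only [Fin.mk_le_mk]
    have := fApp_mono θ (show (a:ℕ) + (p:ℕ) ≤ (b:ℕ) + (p:ℕ) by omega)
    omega

/-- the restriction `θ|_[i]^[j] : [i] → [j]` of `θ` (clamped). -/
def restrictOH {m n : ℕ} (θ : Fin (m+1) →o Fin (n+1)) (i j : ℕ) : Fin (i+1) →o Fin (j+1) where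
  toFun k := ⟨min (fApp θ (k:ℕ)) j, Nat.lt_succ_of_le (Nat.min_le_right _ _)⟩
  monotone' := by
    intro a b hab
    have h : (a:ℕ) ≤ (b:ℕ) := hab
    simp only [Fin.mk_le_mk]
    have := fApp_mono θ h
    omega

/-- ascending product `f a * f (a+1) * ⋯ * f (b-1)`. -/
def aProd {γ : Type*} [Monoid γ] (f : ℕ → γ) (a : ℕ) : ℕ → γ
  | 0 => 1
  | b+1 => if a ≤ b then aProd f a b * f b else 1

/-- descending product `f (b-1) * f (b-2) * ⋯ * f a`. -/
def dProd {γ : Type*} [Monoid γ] (f : ℕ → γ) (a : ℕ) : ℕ → γ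
  | 0 => 1
  | b+1 => if a ≤ b then f b * dProd f a b else 1

end Paper
namespace Paper

/-- A bisimplicial set, as a contravariant functor in two simplicial directions. -/
structure BiSSet where
  obj : ℕ → ℕ → Type
  map : ∀ {p p' q q' : ℕ}, (Fin (p+1) →o Fin (p'+1)) → (Fin (q+1) →o Fin (q'+1)) →
    obj p' q' → obj p q
  map_id : ∀ {p q : ℕ} (x : obj p q), map OrderHom.id OrderHom.id x = x
  map_comp : ∀ {p p' p'' q q' q'' : ℕ} (α : Fin (p+1) →o Fin (p'+1)) (α' : Fin (p'+1) →o Fin (p''+1))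
    (β : Fin (q+1) →o Fin (q'+1)) (β' : Fin (q'+1) →o Fin (q''+1)) (x : obj p'' q''),
    map α β (map α' β' x) = map (α'.comp α) (β'.comp β) x

namespace BiSSet

/-- horizontal face `d^h_k`. -/
def hface (X : BiSSet) (k : ℕ) {p q : ℕ} (x : X.obj p q) : X.obj (p-1) q :=
  X.map (δOH k (p-1) p) OrderHom.id x

/-- vertical face `d^v_k`. -/
def vface (X : BiSSet) (k : ℕ) {p q : ℕ} (x : X.obj p q) : X.obj p (q-1) :=
  X.map OrderHom.id (δOH k (q-1) q) x

/-- horizontal descending composite `d^h_{i+c} ⋯ d^h_{i+1}`. -/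
def hdcomp (X : BiSSet) : (i c : ℕ) → {p q : ℕ} → X.obj p q → X.obj (p - c) q
  | _, 0, _, _, x => x
  | i, c+1, _, _, x => X.hface (i+1) (X.hdcomp (i+1) c x)

/-- vertical descending composite `d^v_{i+c} ⋯ d^v_{i+1}`. -/
def vdcomp (X : BiSSet) : (i c : ℕ) → {p q : ℕ} → X.obj p q → X.obj p (q - c)
  | _, 0, _, _, x => x
  | i, c+1, _, _, x => X.vface (i+1) (X.vdcomp (i+1) c x)

/-- vertical descending composite `d^v_{c-1} ⋯ d^v_0`. -/
def vd0comp (X : BiSSet) : (c : ℕ) → {p q : ℕ} → X.obj p q → X.obj p (q - c)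
  | 0, _, _, x => x
  | c+1, _, _, x => X.vface 0 (X.vdcomp 0 c x)

/-- the condition defining `Tot_n X ⊆ ∏_{q=n}^{0} X_{q,n-q}`. -/
def totCond (X : BiSSet) (n : ℕ) (x : ∀ q : Fin (n+1), X.obj (q:ℕ) (n - (q:ℕ))) : Prop :=
  ∀ (q : ℕ) (h : q + 1 ≤ n),
    X.map (δOH (q+1) q (q+1)) OrderHom.id (x ⟨q+1, by omega⟩) =
    X.map OrderHom.id (δOH 0 (n - (q+1)) (n - q)) (x ⟨q, by omega⟩)

/-- the structure map `Tot_θ X` on underlying tuples, via the splittings of `θ`. -/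
def totRaw (X : BiSSet) {m n : ℕ} (θ : Fin (m+1) →o Fin (n+1))
    (x : ∀ q : Fin (n+1), X.obj (q:ℕ) (n - (q:ℕ))) : ∀ p : Fin (m+1), X.obj (p:ℕ) (m - (p:ℕ)) :=
  fun p => X.map (splLe θ p) (splGe θ p) (x (θ p))

/-- the components of `φ_X : Diag X → Tot X`,
`x ↦ (x d^h_n ⋯ d^h_{q+1} d^v_{q-1} ⋯ d^v_0)_{q=n,…,0}`. -/
def phiRaw (X : BiSSet) (n : ℕ) (x : X.obj n n) : ∀ q : Fin (n+1), X.obj (q:ℕ) (n - (q:ℕ)) :=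
  fun q => cast
    (congrArg (fun t => X.obj t (n - (q:ℕ))) (Nat.sub_sub_self (Nat.lt_succ_iff.mp q.isLt)))
    (X.vd0comp (q:ℕ) (X.hdcomp (q:ℕ) (n - (q:ℕ)) x))

end BiSSet

/-- morphisms of bisimplicial sets. -/
structure BiHom (X Y : BiSSet) where
  app : ∀ p q, X.obj p q → Y.obj p q
  comm : ∀ {p p' q q' : ℕ} (α : Fin (p+1) →o Fin (p'+1)) (β : Fin (q+1) →o Fin (q'+1))
    (x : X.obj p' q'), app p q (X.map α β x) = Y.map α β (app p' q' x)

end Paper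
namespace Paper

lemma oh_ext {a b : ℕ} {f g : Fin (a+1) →o Fin (b+1)}
    (h : ∀ i : Fin (a+1), ((f i : ℕ)) = (g i : ℕ)) : f = g :=
  OrderHom.ext _ _ (funext fun i => Fin.ext (h i))

/-- inclusion `[a] → [b]` (clamped), `i ↦ i`. -/
def inclLow (a b : ℕ) : Fin (a+1) →o Fin (b+1) where
  toFun i := ⟨min (i:ℕ) b, Nat.lt_succ_of_le (Nat.min_le_right _ _)⟩
  monotone' := fun i j hij => by
    have h : (i:ℕ) ≤ (j:ℕ) := hij
    simp only [Fin.mk_le_mk]; omega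

/-- shift `[a] → [b]` (clamped), `i ↦ i + c`. -/
def shiftC (c a b : ℕ) : Fin (a+1) →o Fin (b+1) where
  toFun i := ⟨min ((i:ℕ)+c) b, Nat.lt_succ_of_le (Nat.min_le_right _ _)⟩
  monotone' := fun i j hij => by
    have h : (i:ℕ) ≤ (j:ℕ) := hij
    simp only [Fin.mk_le_mk]; omega

lemma δOH_val (k a b : ℕ) (i : Fin (a+1)) :
    ((δOH k a b i : Fin (b+1)) : ℕ) = min (if (i:ℕ) < k then (i:ℕ) else (i:ℕ)+1) b := rfl

lemma inclLow_val (a b : ℕ) (i : Fin (a+1)) :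
    ((inclLow a b i : Fin (b+1)) : ℕ) = min (i:ℕ) b := rfl

lemma shiftC_val (c a b : ℕ) (i : Fin (a+1)) :
    ((shiftC c a b i : Fin (b+1)) : ℕ) = min ((i:ℕ)+c) b := rfl

lemma splLe_val {m n : ℕ} (θ : Fin (m+1) →o Fin (n+1)) (p : Fin (m+1)) (i : Fin ((p:ℕ)+1)) :
    ((splLe θ p i : Fin ((θ p : ℕ)+1)) : ℕ) = fApp θ (i:ℕ) := rfl

lemma splGe_val {m n : ℕ} (θ : Fin (m+1) →o Fin (n+1)) (p : Fin (m+1)) (i : Fin (m - (p:ℕ) + 1)) :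
    ((splGe θ p i : Fin (n - (θ p : ℕ) + 1)) : ℕ) = fApp θ ((i:ℕ) + (p:ℕ)) - (θ p : ℕ) := rfl

lemma fApp_comp {l m n : ℕ} (ψ : Fin (l+1) →o Fin (m+1)) (θ : Fin (m+1) →o Fin (n+1))
    (z : ℕ) : fApp (θ.comp ψ) z = fApp θ (fApp ψ z) := by
  unfold fApp
  simp only [OrderHom.comp_coe, Function.comp_apply]
  congr 2
  apply Fin.ext
  exact (Nat.min_eq_left (Nat.lt_succ_iff.mp (ψ _).isLt)).symm

namespace BiSSet

/-- iterated compatibility: if `x` satisfies the Tot condition then for `a ≤ b ≤ n`,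
restricting `x_b` horizontally to `[a]` equals shifting `x_a` vertically by `b - a`. -/
lemma key (X : BiSSet) {n : ℕ} (x : ∀ q : Fin (n+1), X.obj (q:ℕ) (n - (q:ℕ)))
    (hx : totCond X n x) (a b : ℕ) (hab : a ≤ b) :
    ∀ _hb : b ≤ n,
    X.map (inclLow a b) OrderHom.id (x ⟨b, by omega⟩) =
    X.map OrderHom.id (shiftC (b - a) (n - b) (n - a)) (x ⟨a, by omega⟩) := by
  induction b, hab using Nat.le_induction with
  | base =>
    intro hb
    have h1 : inclLow a a = OrderHom.id := oh_ext fun i => by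
      have := i.isLt; simp [inclLow_val]; omega
    have h2 : shiftC (a - a) (n - a) (n - a) = OrderHom.id := oh_ext fun i => by
      have := i.isLt; simp [shiftC]; omega
    rw [h1, h2, X.map_id]
  | succ b hab ih =>
    intro hb
    have hbn : b ≤ n := by omega
    have hcond := hx b hb
    have e1 : (δOH (b+1) b (b+1)).comp (inclLow a b) = inclLow a (b+1) :=
      oh_ext fun i => by
        have := i.isLt
        simp only [OrderHom.comp_coe, Function.comp_apply, inclLow_val, δOH_val,
          OrderHom.coe_mk]
        simp only [min_def]
        split_ifs <;> omega
    have e2 : (shiftC (b - a) (n - b) (n - a)).comp (δOH 0 (n - (b+1)) (n - b)) =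
        shiftC (b+1-a) (n-(b+1)) (n-a) :=
      oh_ext fun i => by
        have := i.isLt
        simp only [OrderHom.comp_coe, Function.comp_apply, shiftC_val, δOH_val,
          OrderHom.coe_mk]
        split_ifs <;> omega
    have wa : a < n+1 := by omega
    have wb : b < n+1 := by omega
    have wb1 : b+1 < n+1 := by omega
    calc X.map (inclLow a (b+1)) OrderHom.id (x ⟨b+1, wb1⟩)
        = X.map (inclLow a b) OrderHom.id
            (X.map (δOH (b+1) b (b+1)) OrderHom.id (x ⟨b+1, wb1⟩)) := by
          simp only [X.map_comp, e1, OrderHom.comp_id, OrderHom.id_comp]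
      _ = X.map (inclLow a b) OrderHom.id
            (X.map OrderHom.id (δOH 0 (n - (b+1)) (n - b)) (x ⟨b, wb⟩)) := by
          rw [hcond]
      _ = X.map OrderHom.id (δOH 0 (n - (b+1)) (n - b))
            (X.map (inclLow a b) OrderHom.id (x ⟨b, wb⟩)) := by
          simp only [X.map_comp, OrderHom.comp_id, OrderHom.id_comp]
      _ = X.map OrderHom.id (δOH 0 (n - (b+1)) (n - b))
            (X.map OrderHom.id (shiftC (b - a) (n - b) (n - a)) (x ⟨a, wa⟩)) := by
          rw [ih hbn]
      _ = X.map OrderHom.id (shiftC (b+1-a) (n-(b+1)) (n-a)) (x ⟨a, wa⟩) := by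
          simp only [X.map_comp, e2, OrderHom.comp_id, OrderHom.id_comp]

/-- `key`, stated for `Fin` elements. -/
lemma key' (X : BiSSet) {n : ℕ} (x : ∀ q : Fin (n+1), X.obj (q:ℕ) (n - (q:ℕ)))
    (hx : totCond X n x) (pa pb : Fin (n+1)) (hab : pa ≤ pb) :
    X.map (inclLow (pa:ℕ) (pb:ℕ)) OrderHom.id (x pb) =
    X.map OrderHom.id (shiftC ((pb:ℕ) - (pa:ℕ)) (n - (pb:ℕ)) (n - (pa:ℕ))) (x pa) :=
  key X x hx (pa:ℕ) (pb:ℕ) hab (Nat.lt_succ_iff.mp pb.isLt)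

lemma main1 (X : BiSSet) {m n : ℕ} (θ : Fin (m+1) →o Fin (n+1))
    (x : ∀ q : Fin (n+1), X.obj (q:ℕ) (n - (q:ℕ))) (hx : totCond X n x)
    (q : ℕ) (h0 : q < m+1) (h1 : q+1 < m+1) :
    X.map (δOH (q+1) q (q+1)) OrderHom.id (totRaw X θ x ⟨q+1, h1⟩) =
    X.map OrderHom.id (δOH 0 (m - (q+1)) (m - q)) (totRaw X θ x ⟨q, h0⟩) := by
  simp only [totRaw]
  have hab : θ ⟨q, h0⟩ ≤ θ ⟨q+1, h1⟩ := θ.monotone (by simp [Fin.mk_le_mk])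
  have habn : (θ ⟨q, h0⟩ : ℕ) ≤ (θ ⟨q+1, h1⟩ : ℕ) := hab
  have ea : fApp θ q = (θ ⟨q, h0⟩ : ℕ) := fApp_coe θ ⟨q, h0⟩
  have eb : fApp θ (q+1) = (θ ⟨q+1, h1⟩ : ℕ) := fApp_coe θ ⟨q+1, h1⟩
  have hbn : (θ ⟨q+1, h1⟩ : ℕ) ≤ n := Nat.lt_succ_iff.mp (θ ⟨q+1, h1⟩).isLt
  have e1 : (splLe θ ⟨q+1, h1⟩).comp (δOH (q+1) q (q+1)) =
      (inclLow ((θ ⟨q, h0⟩ : ℕ)) ((θ ⟨q+1, h1⟩ : ℕ))).comp (splLe θ ⟨q, h0⟩) :=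
    oh_ext fun i => by
      have hi := i.isLt
      have hm := fApp_mono θ (show (i:ℕ) ≤ q by omega)
      simp only [OrderHom.comp_coe, Function.comp_apply, splLe_val, δOH_val, inclLow_val,
        OrderHom.coe_mk]
      have harg : min (if (i:ℕ) < q+1 then (i:ℕ) else (i:ℕ)+1) (q+1) = (i:ℕ) := by
        split_ifs
        omega
      rw [harg]
      omega
  have e2 : (shiftC ((θ ⟨q+1, h1⟩ : ℕ) - (θ ⟨q, h0⟩ : ℕ)) (n - (θ ⟨q+1, h1⟩ : ℕ))
        (n - (θ ⟨q, h0⟩ : ℕ))).comp (splGe θ ⟨q+1, h1⟩) =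
      (splGe θ ⟨q, h0⟩).comp (δOH 0 (m - (q+1)) (m - q)) :=
    oh_ext fun i => by
      have hi : (i:ℕ) < m - (q+1) + 1 := i.isLt
      have hm := fApp_mono θ (show q+1 ≤ (i:ℕ) + (q+1) by omega)
      have hle := fApp_le θ ((i:ℕ) + (q+1))
      have hv1 : ((⟨q+1, h1⟩ : Fin (m+1)) : ℕ) = q+1 := rfl
      have hv0 : ((⟨q, h0⟩ : Fin (m+1)) : ℕ) = q := rfl
      simp only [OrderHom.comp_coe, Function.comp_apply, splGe_val, δOH_val, shiftC_val,
        OrderHom.coe_mk, hv1, hv0]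
      have harg : min (if (i:ℕ) < 0 then (i:ℕ) else (i:ℕ)+1) (m - q) + q
          = (i:ℕ) + (q+1) := by
        split_ifs <;> omega
      rw [harg]
      omega
  calc X.map (δOH (q+1) q (q+1)) OrderHom.id
          (X.map (splLe θ ⟨q+1, h1⟩) (splGe θ ⟨q+1, h1⟩) (x (θ ⟨q+1, h1⟩)))
      = X.map (splLe θ ⟨q, h0⟩) (splGe θ ⟨q+1, h1⟩)
          (X.map (inclLow ((θ ⟨q, h0⟩ : ℕ)) ((θ ⟨q+1, h1⟩ : ℕ))) OrderHom.id
            (x (θ ⟨q+1, h1⟩))) := by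
        simp only [X.map_comp, e1, OrderHom.comp_id, OrderHom.id_comp]
    _ = X.map (splLe θ ⟨q, h0⟩) (splGe θ ⟨q+1, h1⟩)
          (X.map OrderHom.id
            (shiftC ((θ ⟨q+1, h1⟩ : ℕ) - (θ ⟨q, h0⟩ : ℕ))
              (n - (θ ⟨q+1, h1⟩ : ℕ)) (n - (θ ⟨q, h0⟩ : ℕ)))
            (x (θ ⟨q, h0⟩))) := by
        rw [key' X x hx _ _ hab]
    _ = X.map OrderHom.id (δOH 0 (m - (q+1)) (m - q))
          (X.map (splLe θ ⟨q, h0⟩) (splGe θ ⟨q, h0⟩) (x (θ ⟨q, h0⟩))) := by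
        simp only [X.map_comp, e2, OrderHom.comp_id, OrderHom.id_comp]

end BiSSet
end Paper
open Paper Paper.BiSSet in
/-- the Artin–Mazur total simplicial set of a bisimplicial set is a
simplicial set: the structure maps preserve the defining compatibility condition,
and they are functorial. -/
theorem stmt_3 (X : BiSSet) :
    (∀ {m n : ℕ} (θ : Fin (m+1) →o Fin (n+1)) (x : ∀ q : Fin (n+1), X.obj (q:ℕ) (n - (q:ℕ))),
      totCond X n x → totCond X m (totRaw X θ x)) ∧
    (∀ {n : ℕ} (x : ∀ q : Fin (n+1), X.obj (q:ℕ) (n - (q:ℕ))),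
      totRaw X OrderHom.id x = x) ∧
    (∀ {l m n : ℕ} (ψ : Fin (l+1) →o Fin (m+1)) (θ : Fin (m+1) →o Fin (n+1))
      (x : ∀ q : Fin (n+1), X.obj (q:ℕ) (n - (q:ℕ))),
      totRaw X ψ (totRaw X θ x) = totRaw X (θ.comp ψ) x) := by
  refine ⟨?_, ?_, ?_⟩
  · intro m n θ x hx q hq
    exact main1 X θ x hx q (by omega) (by omega)
  · intro n x
    funext p
    show X.map (splLe OrderHom.id p) (splGe OrderHom.id p) (x p) = x p
    have h1 : splLe (OrderHom.id : Fin (n+1) →o Fin (n+1)) p = OrderHom.id :=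
      oh_ext fun i => by
        have hi := i.isLt
        have hp := p.isLt
        show fApp OrderHom.id (i:ℕ) = (i:ℕ)
        simp only [splLe_val, fApp, OrderHom.id_coe, id_eq, min_def]
        split_ifs <;> omega
    have h2 : splGe (OrderHom.id : Fin (n+1) →o Fin (n+1)) p = OrderHom.id :=
      oh_ext fun i => by
        have hi := i.isLt
        have hp := p.isLt
        show fApp OrderHom.id ((i:ℕ) + (p:ℕ)) - (p:ℕ) = (i:ℕ)
        simp only [splGe_val, fApp, OrderHom.id_coe, id_eq, min_def]
        split_ifs <;> omega
    rw [h1, h2]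
    exact X.map_id _
  · intro l m n ψ θ x
    funext p
    show X.map (splLe ψ p) (splGe ψ p)
        (X.map (splLe θ (ψ p)) (splGe θ (ψ p)) (x (θ (ψ p)))) =
      X.map (splLe (θ.comp ψ) p) (splGe (θ.comp ψ) p) (x (θ (ψ p)))
    rw [X.map_comp]
    have h1 : splLe (θ.comp ψ) p = (splLe θ (ψ p)).comp (splLe ψ p) :=
      oh_ext fun i => by
        simp only [splLe_val, OrderHom.comp_coe, Function.comp_apply, OrderHom.coe_mk,
          fApp_comp]
        rfl
    have h2 : splGe (θ.comp ψ) p = (splGe θ (ψ p)).comp (splGe ψ p) :=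
      oh_ext fun i => by
        have hge : (ψ p : ℕ) ≤ fApp ψ ((i:ℕ) + (p:ℕ)) := by
          have := fApp_mono ψ (show (p:ℕ) ≤ (i:ℕ) + (p:ℕ) by omega)
          have := fApp_coe ψ p
          omega
        simp only [splGe_val, OrderHom.comp_coe, Function.comp_apply, OrderHom.coe_mk,
          fApp_comp]
        show _ = fApp θ ((fApp ψ ((i:ℕ) + (p:ℕ)) - (ψ p : ℕ)) + (ψ p : ℕ)) - (θ (ψ p) : ℕ)
        rw [Nat.sub_add_cancel hge]
    rw [h1, h2]
    rfl
end

section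
/- For every bisimplicial set X, the maps (φ_X)_n : Diag_n X → Tot_n X, x ↦ (x d^h_n d^h_{n−1} ⋯ d^h_{q+1} d^v_{q−1} ⋯ d^v_0)_{q=n,…,0}, are well defined (each component satisfies the compatibility condition defining Tot_n X) and assemble into a simplicial map Diag X → Tot X. Moreover X ↦ φ_X is natural in X. -/
namespace Paper
namespace BiSSet

theorem map_eq (X : BiSSet) {a n b m : ℕ} {α α' : Fin (a+1) →o Fin (n+1)}
    {β β' : Fin (b+1) →o Fin (m+1)}
    (hα : ∀ i, (α i : ℕ) = (α' i : ℕ)) (hβ : ∀ j, (β j : ℕ) = (β' j : ℕ))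
    (x : X.obj n m) : X.map α β x = X.map α' β' x := by
  have h1 : α = α' := OrderHom.ext _ _ (funext fun i => Fin.ext (hα i))
  have h2 : β = β' := OrderHom.ext _ _ (funext fun j => Fin.ext (hβ j))
  rw [h1, h2]

/-- the composite `d^h_{i+c} ⋯ d^h_{i+1}` as a single order hom. -/
def hdA (i c p : ℕ) : Fin (p - c + 1) →o Fin (p + 1) where
  toFun j := ⟨min (if (j:ℕ) ≤ i then (j:ℕ) else (j:ℕ) + c) p,
    Nat.lt_succ_of_le (Nat.min_le_right _ _)⟩
  monotone' := by
    intro a b hab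
    have h : (a:ℕ) ≤ (b:ℕ) := hab
    simp only [Fin.mk_le_mk]
    split_ifs <;> omega

theorem hdcomp_eq (X : BiSSet) (c : ℕ) : ∀ (i : ℕ) {p q : ℕ} (x : X.obj p q),
    X.hdcomp i c x = X.map (hdA i c p) OrderHom.id x := by
  induction c with
  | zero =>
    intro i p q x
    have h : hdA i 0 p = OrderHom.id := by
      apply OrderHom.ext; funext j; apply Fin.ext
      show min (if (j:ℕ) ≤ i then (j:ℕ) else (j:ℕ) + 0) p = (j:ℕ)
      have := j.isLt
      split_ifs <;> omega
    show x = _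
    rw [h, X.map_id]
  | succ c ih =>
    intro i p q x
    show X.hface (i+1) (X.hdcomp (i+1) c x) = _
    rw [ih (i+1) x]
    unfold hface
    rw [X.map_comp]
    apply map_eq
    · intro j
      have := j.isLt
      simp only [hdA, δOH, OrderHom.comp_coe, OrderHom.coe_mk, Function.comp_apply]
      erw [OrderHom.coe_mk, OrderHom.coe_mk, OrderHom.coe_mk]
      dsimp only
      split_ifs <;> omega
    · intro j; rfl

/-- the composite `d^v_{i+c} ⋯ d^v_{i+1}` as a single order hom. -/
theorem vdcomp_eq (X : BiSSet) (c : ℕ) : ∀ (i : ℕ) {p q : ℕ} (x : X.obj p q),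
    X.vdcomp i c x = X.map OrderHom.id (hdA i c q) x := by
  induction c with
  | zero =>
    intro i p q x
    have h : hdA i 0 q = OrderHom.id := by
      apply OrderHom.ext; funext j; apply Fin.ext
      show min (if (j:ℕ) ≤ i then (j:ℕ) else (j:ℕ) + 0) q = (j:ℕ)
      have := j.isLt
      split_ifs <;> omega
    show x = _
    rw [h, X.map_id]
  | succ c ih =>
    intro i p q x
    show X.vface (i+1) (X.vdcomp (i+1) c x) = _
    rw [ih (i+1) x]
    unfold vface
    rw [X.map_comp]
    apply map_eq
    · intro j; rfl
    · intro j
      have := j.isLt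
      simp only [hdA, δOH, OrderHom.comp_coe, OrderHom.coe_mk, Function.comp_apply]
      erw [OrderHom.coe_mk, OrderHom.coe_mk, OrderHom.coe_mk]
      dsimp only
      split_ifs <;> omega

/-- the shift-by-`q` order hom `[n-q] → [n]`, `j ↦ j + q`. -/
def shB (n q : ℕ) : Fin (n - q + 1) →o Fin (n + 1) where
  toFun j := ⟨min ((j:ℕ) + q) n, Nat.lt_succ_of_le (Nat.min_le_right _ _)⟩
  monotone' := by
    intro a b hab
    have h : (a:ℕ) ≤ (b:ℕ) := hab
    simp only [Fin.mk_le_mk]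
    omega

theorem vd0comp_eq (X : BiSSet) (c : ℕ) {p q : ℕ} (hc : c ≤ q) (x : X.obj p q) :
    X.vd0comp c x = X.map OrderHom.id (shB q c) x := by
  cases c with
  | zero =>
    have h : shB q 0 = OrderHom.id := by
      apply OrderHom.ext; funext j; apply Fin.ext
      show min ((j:ℕ) + 0) q = (j:ℕ)
      have := j.isLt
      omega
    show x = _
    rw [h, X.map_id]
  | succ c =>
    show X.vface 0 (X.vdcomp 0 c x) = _
    rw [vdcomp_eq X c 0 x]
    unfold vface
    rw [X.map_comp]
    apply map_eq
    · intro j; rfl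
    · intro j
      have := j.isLt
      simp only [hdA, shB, δOH, OrderHom.comp_coe, OrderHom.coe_mk, Function.comp_apply]
      erw [OrderHom.coe_mk, OrderHom.coe_mk, OrderHom.coe_mk]
      dsimp only
      split_ifs <;> omega

/-- the inclusion `[q] → [n]`, `j ↦ j`. -/
def incA (n q : ℕ) : Fin (q + 1) →o Fin (n + 1) where
  toFun j := ⟨min (j:ℕ) n, Nat.lt_succ_of_le (Nat.min_le_right _ _)⟩
  monotone' := by
    intro a b hab
    have h : (a:ℕ) ≤ (b:ℕ) := hab
    simp only [Fin.mk_le_mk]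
    omega

theorem cast_map (X : BiSSet) {a a' b n m : ℕ} (h : a = a') (hc : X.obj a b = X.obj a' b)
    (α : Fin (a+1) →o Fin (n+1)) (α' : Fin (a'+1) →o Fin (n+1))
    (hα : ∀ i : Fin (a'+1), (α ⟨(i:ℕ), by omega⟩ : ℕ) = (α' i : ℕ))
    (β : Fin (b+1) →o Fin (m+1)) (x : X.obj n m) :
    cast hc (X.map α β x) = X.map α' β x := by
  subst h
  rw [cast_eq]
  apply map_eq _ _ (fun j => rfl) x
  intro i
  have := hα i
  simpa using this

theorem phiRaw_eq (X : BiSSet) (n : ℕ) (x : X.obj n n) (q : Fin (n+1)) :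
    phiRaw X n x q = X.map (incA n (q:ℕ)) (shB n (q:ℕ)) x := by
  have hq : (q:ℕ) ≤ n := Nat.lt_succ_iff.mp q.isLt
  unfold phiRaw
  rw [hdcomp_eq X (n - (q:ℕ)) (q:ℕ) x,
    vd0comp_eq X (q:ℕ) hq (X.map (hdA (q:ℕ) (n - (q:ℕ)) n) OrderHom.id x),
    X.map_comp]
  apply cast_map X (Nat.sub_sub_self hq)
  intro i
  have := i.isLt
  simp only [hdA, incA, OrderHom.comp_coe, OrderHom.coe_mk, Function.comp_apply,
    OrderHom.id_coe, id_eq]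
  erw [OrderHom.coe_mk, OrderHom.coe_mk]
  dsimp only
  split_ifs <;> omega

end BiSSet
end Paper
open Paper Paper.BiSSet in
/-- for every bisimplicial set `X` the maps `(φ_X)_n : Diag_n X → Tot_n X`
are well defined, assemble into a simplicial map `Diag X → Tot X`, and are natural in `X`. -/
theorem stmt_4 :
    (∀ (X : BiSSet) (n : ℕ) (x : X.obj n n), totCond X n (phiRaw X n x)) ∧
    (∀ (X : BiSSet) {m n : ℕ} (θ : Fin (m+1) →o Fin (n+1)) (x : X.obj n n),
      totRaw X θ (phiRaw X n x) = phiRaw X m (X.map θ θ x)) ∧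
    (∀ (X Y : BiSSet) (f : BiHom X Y) (n : ℕ) (x : X.obj n n),
      (fun q : Fin (n+1) => f.app (q:ℕ) (n - (q:ℕ)) (phiRaw X n x q)) =
        phiRaw Y n (f.app n n x)) := by
  refine ⟨?_, ?_, ?_⟩
  · intro X n x
    simp only [totCond]
    intro q h
    rw [phiRaw_eq, phiRaw_eq, X.map_comp, X.map_comp]
    refine map_eq X (fun i => ?_) (fun j => ?_) x
    · show min (min (if (i:ℕ) < q+1 then (i:ℕ) else (i:ℕ)+1) (q+1)) n
          = min (i:ℕ) n
      have := i.isLt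
      split_ifs
      omega
    · show min ((j:ℕ) + (q+1)) n
          = min (min (if (j:ℕ) < 0 then (j:ℕ) else (j:ℕ)+1) (n-q) + q) n
      have := j.isLt
      simp only [Nat.not_lt_zero, if_false]
      omega
  · intro X m n θ x
    funext p
    show X.map (splLe θ p) (splGe θ p) (phiRaw X n x (θ p)) = _
    rw [phiRaw_eq, phiRaw_eq, X.map_comp, X.map_comp]
    refine map_eq X (fun i => ?_) (fun j => ?_) x
    · show min (fApp θ (i:ℕ)) n = fApp θ (i:ℕ)
      have := fApp_le θ (i:ℕ)
      omega
    · show min (fApp θ ((j:ℕ) + (p:ℕ)) - ((θ p:ℕ)) + (θ p:ℕ)) n = fApp θ ((j:ℕ) + (p:ℕ))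
      have h1 := fApp_le θ ((j:ℕ) + (p:ℕ))
      have h2 : (θ p : ℕ) ≤ fApp θ ((j:ℕ) + (p:ℕ)) := by
        rw [← fApp_coe θ p]
        exact fApp_mono θ (by omega)
      omega
  · intro X Y f n x
    funext q
    rw [phiRaw_eq, phiRaw_eq, f.comm]
end

section
/- For a simplicial group G, the maps (D_G)_n : Diag_n NG → W̄_n G, (g_i)_{i=n−1,…,0} ↦ (g_i d_n d_{n−1} ⋯ d_{i+1})_{i=n−1,…,0}, assemble into a simplicial map D_G : Diag NG → W̄G, natural in G. -/
namespace Paper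

/-- A simplicial group, given by levels, structure maps, functoriality,
and levelwise multiplicativity. -/
structure SGrp where
  obj : ℕ → Type
  grp : ∀ n, Group (obj n)
  map : ∀ {m n : ℕ}, (Fin (m+1) →o Fin (n+1)) → obj n → obj m
  map_id : ∀ {n : ℕ} (x : obj n), map OrderHom.id x = x
  map_comp : ∀ {l m n : ℕ} (α : Fin (l+1) →o Fin (m+1)) (β : Fin (m+1) →o Fin (n+1)) (x : obj n),
    map α (map β x) = map (β.comp α) x
  map_mul : ∀ {m n : ℕ} (θ : Fin (m+1) →o Fin (n+1)) (x y : obj n),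
    map θ (x * y) = map θ x * map θ y

attribute [instance] SGrp.grp

namespace SGrp

/-- face `d_k : G_N → G_{N-1}` -/
def face (G : SGrp) (k : ℕ) {N : ℕ} : G.obj N → G.obj (N-1) := G.map (δOH k (N-1) N)

/-- degeneracy `s_k : G_M → G_{M+1}` -/
def deg (G : SGrp) (k : ℕ) {M : ℕ} : G.obj M → G.obj (M+1) := G.map (σOH k (M+1) M)

/-- transport between levels (junk value `1` when levels differ). -/
def gcast (G : SGrp) {a : ℕ} (b : ℕ) (x : G.obj a) : G.obj b := if h : a = b then h ▸ x else 1

/-- descending composite of faces `d_{i+c} d_{i+c-1} ⋯ d_{i+1}`. -/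
def dcomp (G : SGrp) : (i c : ℕ) → {N : ℕ} → G.obj N → G.obj (N - c)
  | _, 0, _, x => x
  | i, c+1, _, x => G.face (i+1) (G.dcomp (i+1) c x)

/-- ascending composite of degeneracies `s_i s_{i+1} ⋯ s_{i+c-1}`. -/
def scomp (G : SGrp) : (i c : ℕ) → {M : ℕ} → G.obj M → G.obj (M + c)
  | _, 0, _, x => x
  | i, c+1, _, x => G.deg (i+c) (G.scomp i c x)

/-- `x ↦ x d_j ⋯ d_{i+1} s_i ⋯ s_{j-1}`, an endomap of `G_N`. -/
def ds (G : SGrp) (i j : ℕ) {N : ℕ} (x : G.obj N) : G.obj N :=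
  G.gcast N (G.scomp i (min (j - i) N) (G.dcomp i (min (j - i) N) x))

/-- `x ↦ x d_j ⋯ d_{i+1} s_i ⋯ s_{n-1} : G_j → G_n`. -/
def dsTo (G : SGrp) (i n : ℕ) {j : ℕ} (x : G.obj j) : G.obj n :=
  G.gcast n (G.scomp i (n - i) (G.gcast i (G.dcomp i (j - i) x)))

/-- the `y_i` of the section `S_G`, defined by descending recursion (with fuel). -/
def yAux (G : SGrp) (n : ℕ) (g : ∀ j : ℕ, G.obj j) : ℕ → ℕ → G.obj n
  | 0, _ => 1
  | fuel+1, i =>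
      aProd (fun j => G.ds i j (G.yAux n g fuel j)⁻¹) (i+1) n *
      dProd (fun j => G.dsTo i n (g j)) i n

/-- `W̄_n G = ∏_{j = n-1}^{0} G_j`. -/
def WbarN (G : SGrp) (n : ℕ) : Type := ∀ j : Fin n, G.obj (j:ℕ)

/-- extension of a tuple in `W̄_n G` by `1`. -/
def gE (G : SGrp) {n : ℕ} (g : G.WbarN n) : ∀ j : ℕ, G.obj j :=
  fun j => if h : j < n then g ⟨j, h⟩ else 1

/-- the coretraction `(S_G)_n : W̄_n G → Diag_n NG = (G_n)^n`. -/
def SGn (G : SGrp) (n : ℕ) (g : G.WbarN n) : Fin n → G.obj n :=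
  fun i => G.yAux n (G.gE g) n (i:ℕ)

/-- extension of a tuple in `(G_n)^n` by `1`. -/
def xE (G : SGrp) {n : ℕ} (x : Fin n → G.obj n) : ℕ → G.obj n :=
  fun j => if h : j < n then x ⟨j, h⟩ else 1

/-- the structure map `W̄_θ : W̄_n G → W̄_m G` of the Kan classifying simplicial set. -/
def wbarMap (G : SGrp) {m n : ℕ} (θ : Fin (m+1) →o Fin (n+1)) (g : G.WbarN n) : G.WbarN m :=
  fun i => dProd (fun j => G.map (restrictOH θ (i:ℕ) j) (G.gE g j))
    ((θ i.castSucc : Fin (n+1)) : ℕ) ((θ i.succ : Fin (n+1)) : ℕ)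

/-- the structure map `(Diag NG)_θ : (G_n)^n → (G_m)^m` of the diagonal of the nerve. -/
def diagMap (G : SGrp) {m n : ℕ} (θ : Fin (m+1) →o Fin (n+1)) (x : Fin n → G.obj n) :
    Fin m → G.obj m :=
  fun i => dProd (fun j => G.map θ (G.xE x j))
    ((θ i.castSucc : Fin (n+1)) : ℕ) ((θ i.succ : Fin (n+1)) : ℕ)

/-- the retraction `(D_G)_n : Diag_n NG → W̄_n G`, `(g_i)_i ↦ (g_i d_n ⋯ d_{i+1})_i`. -/
def DGn (G : SGrp) (n : ℕ) (x : Fin n → G.obj n) : G.WbarN n :=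
  fun i => G.gcast (i:ℕ) (G.dcomp (i:ℕ) (n - (i:ℕ)) (x i))

/-- the components `y_i^{(n+1-k)}` of the homotopy `H`, by descending recursion (with fuel). -/
def hAux (G : SGrp) (n k : ℕ) (g : ℕ → G.obj n) : ℕ → ℕ → G.obj n
  | 0, _ => 1
  | fuel+1, i =>
      if k ≤ i + 1 then g i
      else
        aProd (fun j => G.ds i j (G.hAux n k g fuel j)⁻¹) (i+1) (k-1) *
        dProd (fun j => G.ds i (k-1) (g j)) i (k-1)

end SGrp

/-- recover `k` from the simplex `τ^{n+1-k} ∈ Δ^1_n`: the number of vertices sent to `0`. -/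
def kOf {n : ℕ} (t : Fin (n+1) →o Fin 2) : ℕ :=
  (Finset.univ.filter (fun i => t i = 0)).card

namespace SGrp

/-- the homotopy `H_n : Diag_n NG × Δ^1_n → Diag_n NG`. -/
def Hn (G : SGrp) (n : ℕ) (x : Fin n → G.obj n) (t : Fin (n+1) →o Fin 2) : Fin n → G.obj n :=
  fun i => G.hAux n (kOf t) (G.xE x) (n+1) (i:ℕ)

end SGrp

/-- morphisms of simplicial groups. -/
structure SGrpHom (G G' : SGrp) where
  app : ∀ n, G.obj n → G'.obj n
  comm : ∀ {m n : ℕ} (θ : Fin (m+1) →o Fin (n+1)) (x : G.obj n),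
    app m (G.map θ x) = G'.map θ (app n x)
  mul : ∀ (n : ℕ) (x y : G.obj n), app n (x * y) = app n x * app n y

namespace Stmt7

open Paper Paper.SGrp

/-- clamped inclusion order hom `[a] → [b]`, `t ↦ min t b`. -/
def inclOH (a b : ℕ) : Fin (a+1) →o Fin (b+1) where
  toFun t := ⟨min (t:ℕ) b, Nat.lt_succ_of_le (Nat.min_le_right _ _)⟩
  monotone' := by
    intro i j hij
    have h : (i:ℕ) ≤ (j:ℕ) := hij
    simp only [Fin.mk_le_mk]
    omega

lemma inclOH_self (a : ℕ) : inclOH a a = OrderHom.id := by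
  apply OrderHom.ext; funext t
  exact Fin.ext (by have := t.isLt; show min (t:ℕ) a = (t:ℕ); omega)

variable {G : SGrp}

lemma map_one {m n : ℕ} (θ : Fin (m+1) →o Fin (n+1)) : G.map θ (1 : G.obj n) = 1 := by
  have h := G.map_mul θ 1 1
  rw [mul_one] at h
  exact (left_eq_mul.mp h)

lemma gcast_self {a : ℕ} (x : G.obj a) : G.gcast a x = x := by
  simp [SGrp.gcast]

lemma gcast_eq_map {a b : ℕ} (h : a = b) (x : G.obj a) :
    G.gcast b x = G.map (inclOH b a) x := by
  subst h
  rw [gcast_self, inclOH_self, G.map_id]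

lemma gcast_one {a b : ℕ} : G.gcast b (1 : G.obj a) = 1 := by
  unfold SGrp.gcast
  split_ifs with h
  · subst h; rfl
  · rfl

lemma gcast_mul {a b : ℕ} (x y : G.obj a) :
    G.gcast b (x * y) = G.gcast b x * G.gcast b y := by
  unfold SGrp.gcast
  split_ifs with h
  · subst h; rfl
  · rw [one_mul]

lemma dcomp_incl : ∀ (c i N : ℕ), i + c = N → ∀ (x : G.obj N),
    G.dcomp i c x = G.map (inclOH (N - c) N) x := by
  intro c
  induction c with
  | zero =>
    intro i N h x
    show x = G.map (inclOH (N - 0) N) x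
    rw [show inclOH (N - 0) N = OrderHom.id from inclOH_self N, G.map_id]
  | succ c ih =>
    intro i N h x
    show G.face (i+1) (G.dcomp (i+1) c x) = _
    rw [ih (i+1) N (by omega)]
    unfold SGrp.face
    rw [G.map_comp]
    congr 1
    apply OrderHom.ext; funext t
    apply Fin.ext
    have ht := t.isLt
    simp only [OrderHom.comp_coe, Function.comp_apply, inclOH, δOH, OrderHom.coe_mk]
    show min (min (if (t:ℕ) < i+1 then (t:ℕ) else (t:ℕ)+1) (N-c)) N = min (t:ℕ) N
    split_ifs <;> omega

lemma dProd_hom {γ γ' : Type*} [Monoid γ] [Monoid γ'] (φ : γ → γ')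
    (hmul : ∀ x y, φ (x * y) = φ x * φ y) (hone : φ 1 = 1)
    (f : ℕ → γ) (a : ℕ) : ∀ b, φ (dProd f a b) = dProd (fun j => φ (f j)) a b := by
  intro b
  induction b with
  | zero => exact hone
  | succ b ih =>
    show φ (if a ≤ b then f b * dProd f a b else 1) = if a ≤ b then _ * _ else 1
    split_ifs with h
    · rw [hmul, ih]
    · exact hone

lemma dProd_congr {γ : Type*} [Monoid γ] {f g : ℕ → γ} {a : ℕ} :
    ∀ {b}, (∀ j, a ≤ j → j < b → f j = g j) → dProd f a b = dProd g a b := by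
  intro b
  induction b with
  | zero => intro _; rfl
  | succ b ih =>
    intro h
    show (if a ≤ b then f b * dProd f a b else 1) = (if a ≤ b then g b * dProd g a b else 1)
    split_ifs with hab
    · rw [h b hab (Nat.lt_succ_self b), ih (fun j hj hj' => h j hj (Nat.lt_succ_of_lt hj'))]
    · rfl

lemma DGn_term (G : SGrp) {m n : ℕ} (θ : Fin (m+1) →o Fin (n+1)) (x : Fin n → G.obj n)
    (i : Fin m) (j : ℕ)
    (ha : ((θ i.castSucc : Fin (n+1)) : ℕ) ≤ j)
    (hb : j < ((θ i.succ : Fin (n+1)) : ℕ)) :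
    G.map (restrictOH θ (i:ℕ) j) (G.gE (G.DGn n x) j) =
    G.gcast (i:ℕ) (G.dcomp (i:ℕ) (m - (i:ℕ)) (G.map θ (G.xE x j))) := by
  have hjn : j < n := lt_of_lt_of_le hb (Nat.lt_succ_iff.mp (Fin.isLt _))
  have him : (i:ℕ) < m := i.isLt
  rw [show G.gE (G.DGn n x) j = G.DGn n x ⟨j, hjn⟩ from dif_pos hjn,
      show G.xE x j = x ⟨j, hjn⟩ from dif_pos hjn]
  unfold SGrp.DGn
  rw [dcomp_incl (n - j) j n (by omega), dcomp_incl (m - (i:ℕ)) (i:ℕ) m (by omega),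
      gcast_eq_map (show n - (n - j) = j by omega),
      gcast_eq_map (show m - (m - (i:ℕ)) = (i:ℕ) by omega),
      G.map_comp, G.map_comp, G.map_comp, G.map_comp]
  congr 1
  apply OrderHom.ext; funext t
  have ht : (t:ℕ) ≤ (i:ℕ) := Nat.lt_succ_iff.mp t.isLt
  -- the key monotonicity fact : θ ⟨min t m⟩ ≤ j
  have hkey : ((θ ⟨min (t:ℕ) m, Nat.lt_succ_of_le (Nat.min_le_right _ _)⟩ : Fin (n+1)) : ℕ) ≤ j := by
    have h1 : (⟨min (t:ℕ) m, Nat.lt_succ_of_le (Nat.min_le_right _ _)⟩ : Fin (m+1)) ≤ i.castSucc := by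
      simp only [Fin.le_def, Fin.coe_castSucc]
      omega
    exact le_trans (θ.monotone h1) ha
  apply Fin.ext
  show ((inclOH (n - (n-j)) n) ((inclOH j (n - (n-j))) ((restrictOH θ (i:ℕ) j) t)) : ℕ) =
    ((θ ((inclOH (m - (m - (i:ℕ))) m) ((inclOH (i:ℕ) (m - (m - (i:ℕ)))) t)) : Fin (n+1)) : ℕ)
  have harg : ((inclOH (m - (m - (i:ℕ))) m) ((inclOH (i:ℕ) (m - (m - (i:ℕ)))) t) : Fin (m+1)) =
      ⟨min (t:ℕ) m, Nat.lt_succ_of_le (Nat.min_le_right _ _)⟩ := by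
    apply Fin.ext
    simp only [inclOH, OrderHom.coe_mk]
    show min (min (t:ℕ) (m - (m - (i:ℕ)))) m = min (t:ℕ) m
    omega
  rw [harg]
  simp only [inclOH, restrictOH, fApp, OrderHom.coe_mk]
  have hle : ((θ ⟨min (t:ℕ) m, Nat.lt_succ_of_le (Nat.min_le_right _ _)⟩ : Fin (n+1)) : ℕ) ≤ n :=
    Nat.lt_succ_iff.mp (Fin.isLt _)
  show min (min (min ((θ ⟨min (t:ℕ) m, Nat.lt_succ_of_le (Nat.min_le_right _ _)⟩ : Fin (n+1)) : ℕ) j) (n - (n-j))) n = ((θ ⟨min (t:ℕ) m, Nat.lt_succ_of_le (Nat.min_le_right _ _)⟩ : Fin (n+1)) : ℕ)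
  omega

lemma app_one {G G' : SGrp} (f : SGrpHom G G') (n : ℕ) : f.app n (1 : G.obj n) = 1 := by
  have h := f.mul n 1 1
  rw [mul_one] at h
  exact (left_eq_mul.mp h)

lemma app_gcast {G G' : SGrp} (f : SGrpHom G G') {a b : ℕ} (y : G.obj a) :
    f.app b (G.gcast b y) = G'.gcast b (f.app a y) := by
  unfold SGrp.gcast
  split_ifs with h
  · subst h; rfl
  · exact app_one f b

end Stmt7
end Paper
open Paper Paper.SGrp in
/-- the maps `(D_G)_n : Diag_n NG → W̄_n G` assemble into a simplicial map
`D_G : Diag NG → W̄G`, natural in `G`. -/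
theorem stmt_7 :
    (∀ (G : SGrp) {m n : ℕ} (θ : Fin (m+1) →o Fin (n+1)) (x : Fin n → G.obj n),
      G.wbarMap θ (G.DGn n x) = G.DGn m (G.diagMap θ x)) ∧
    (∀ (G G' : SGrp) (f : SGrpHom G G') (n : ℕ) (x : Fin n → G.obj n),
      (fun j : Fin n => f.app (j:ℕ) (G.DGn n x j)) = G'.DGn n (fun i => f.app n (x i))) := by
    constructor
    · intro G m n θ x
      funext i
      show dProd _ _ _ = G.gcast (i:ℕ) (G.dcomp (i:ℕ) (m - (i:ℕ)) (dProd _ _ _))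
      rw [Stmt7.dProd_hom (fun z => G.gcast (i:ℕ) (G.dcomp (i:ℕ) (m - (i:ℕ)) z))
          (by
            intro a b
            rw [Stmt7.dcomp_incl (m - (i:ℕ)) (i:ℕ) m (by have := i.isLt; omega),
                Stmt7.dcomp_incl (m - (i:ℕ)) (i:ℕ) m (by have := i.isLt; omega),
                Stmt7.dcomp_incl (m - (i:ℕ)) (i:ℕ) m (by have := i.isLt; omega),
                G.map_mul, Stmt7.gcast_mul])
          (by
            rw [Stmt7.dcomp_incl (m - (i:ℕ)) (i:ℕ) m (by have := i.isLt; omega), Stmt7.map_one, Stmt7.gcast_one])]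
      exact Stmt7.dProd_congr (fun j hj hj' => Stmt7.DGn_term G θ x i j hj hj')
    · intro G G' f n x
      funext j
      show f.app (j:ℕ) (G.gcast (j:ℕ) (G.dcomp (j:ℕ) (n - (j:ℕ)) (x j))) =
        G'.gcast (j:ℕ) (G'.dcomp (j:ℕ) (n - (j:ℕ)) (f.app n (x j)))
      rw [Stmt7.dcomp_incl (n - (j:ℕ)) (j:ℕ) n (by have := j.isLt; omega),
          Stmt7.dcomp_incl (n - (j:ℕ)) (j:ℕ) n (by have := j.isLt; omega),
          Stmt7.app_gcast, f.comm]
end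

section
/- For a simplicial group G and n ∈ ℕ₀, define (S_G)_n : W̄_n G → Diag_n NG sending (g_i)_{i=n−1,…,0} to (y_i)_{i=n−1,…,0} where, by descending recursion, y_i = (∏_{j=i+1}^{n−1} y_j^{−1} d_j ⋯ d_{i+1} s_i ⋯ s_{j−1}) (∏_{j=n−1}^{i} g_j d_j ⋯ d_{i+1} s_i ⋯ s_{n−1}) ∈ G_n. Then the maps (S_G)_n commute with all face maps: for all k ∈ [0,n] and x ∈ W̄_n G, (x d_k)(S_G)_{n−1} = (x (S_G)_n) d_k. -/
namespace Paper

/-! ### product lemmas -/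

section Prod
variable {γ : Type*} [Monoid γ]

theorem aProd_succ (f : ℕ → γ) (a b : ℕ) :
    aProd f a (b+1) = if a ≤ b then aProd f a b * f b else 1 := rfl

theorem dProd_succ (f : ℕ → γ) (a b : ℕ) :
    dProd f a (b+1) = if a ≤ b then f b * dProd f a b else 1 := rfl

theorem aProd_empty (f : ℕ → γ) {a b : ℕ} (h : b ≤ a) : aProd f a b = 1 := by
  cases b with
  | zero => rfl
  | succ b => rw [aProd_succ, if_neg (by omega)]

theorem dProd_empty (f : ℕ → γ) {a b : ℕ} (h : b ≤ a) : dProd f a b = 1 := by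
  cases b with
  | zero => rfl
  | succ b => rw [dProd_succ, if_neg (by omega)]

theorem aProd_congr {f g : ℕ → γ} {a b : ℕ} (h : ∀ j, a ≤ j → j < b → f j = g j) :
    aProd f a b = aProd g a b := by
  induction b with
  | zero => rfl
  | succ b ih =>
    rw [aProd_succ, aProd_succ]
    split_ifs with hab
    · rw [ih (fun j h1 h2 => h j h1 (by omega)), h b hab (by omega)]
    · rfl

theorem dProd_congr {f g : ℕ → γ} {a b : ℕ} (h : ∀ j, a ≤ j → j < b → f j = g j) :
    dProd f a b = dProd g a b := by
  induction b with
  | zero => rfl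
  | succ b ih =>
    rw [dProd_succ, dProd_succ]
    split_ifs with hab
    · rw [ih (fun j h1 h2 => h j h1 (by omega)), h b hab (by omega)]
    · rfl

theorem aProd_shift (f : ℕ → γ) (a b : ℕ) :
    aProd (fun j => f (j+1)) a b = aProd f (a+1) (b+1) := by
  induction b with
  | zero => rw [aProd_succ, if_neg (by omega)]; rfl
  | succ b ih =>
    rw [aProd_succ, aProd_succ]
    split_ifs with h1 h2
    · rw [ih]
    · omega
    · omega
    · rfl

theorem dProd_shift (f : ℕ → γ) (a b : ℕ) :
    dProd (fun j => f (j+1)) a b = dProd f (a+1) (b+1) := by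
  induction b with
  | zero => rw [dProd_succ, if_neg (by omega)]; rfl
  | succ b ih =>
    rw [dProd_succ, dProd_succ]
    split_ifs with h1 h2
    · rw [ih]
    · omega
    · omega
    · rfl

theorem aProd_split (f : ℕ → γ) {a b c : ℕ} (h1 : a ≤ b) (h2 : b ≤ c) :
    aProd f a c = aProd f a b * aProd f b c := by
  induction c, h2 using Nat.le_induction with
  | base => rw [aProd_empty f (le_refl b), mul_one]
  | succ c hbc ih =>
    rw [aProd_succ, aProd_succ, if_pos (by omega), if_pos (by omega), ih, mul_assoc]

theorem dProd_split (f : ℕ → γ) {a b c : ℕ} (h1 : a ≤ b) (h2 : b ≤ c) :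
    dProd f a c = dProd f b c * dProd f a b := by
  induction c, h2 using Nat.le_induction with
  | base => rw [dProd_empty f (le_refl b), one_mul]
  | succ c hbc ih =>
    rw [dProd_succ, dProd_succ, if_pos (by omega), if_pos (by omega), ih, mul_assoc]

theorem aProd_single (f : ℕ → γ) (a : ℕ) : aProd f a (a+1) = f a := by
  rw [aProd_succ, if_pos (le_refl a), aProd_empty f (le_refl a), one_mul]

theorem dProd_single (f : ℕ → γ) (a : ℕ) : dProd f a (a+1) = f a := by
  rw [dProd_succ, if_pos (le_refl a), dProd_empty f (le_refl a), mul_one]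

theorem aProd_cons (f : ℕ → γ) {a b : ℕ} (h : a < b) :
    aProd f a b = f a * aProd f (a+1) b := by
  rw [aProd_split f (by omega : a ≤ a+1) h, aProd_single]

theorem aProd_pair (f : ℕ → γ) (a : ℕ) : aProd f a (a+1+1) = f a * f (a+1) := by
  rw [aProd_succ, if_pos (by omega), aProd_single]

theorem dProd_pair (f : ℕ → γ) (a : ℕ) : dProd f a (a+1+1) = f (a+1) * f a := by
  rw [dProd_succ, if_pos (by omega), dProd_single]

end Prod

/-! ### map lemmas -/

namespace SGrp
variable (G : SGrp)

theorem map_one {m n : ℕ} (θ : Fin (m+1) →o Fin (n+1)) : G.map θ (1 : G.obj n) = 1 := by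
  have h := G.map_mul θ 1 1
  rw [mul_one] at h
  exact (mul_eq_left.mp h.symm)

theorem map_inv {m n : ℕ} (θ : Fin (m+1) →o Fin (n+1)) (x : G.obj n) :
    G.map θ x⁻¹ = (G.map θ x)⁻¹ := by
  apply eq_inv_of_mul_eq_one_left
  rw [← G.map_mul, inv_mul_cancel, G.map_one]

theorem map_aProd {m n : ℕ} (θ : Fin (m+1) →o Fin (n+1)) (f : ℕ → G.obj n) (a b : ℕ) :
    G.map θ (aProd f a b) = aProd (fun j => G.map θ (f j)) a b := by
  induction b with
  | zero => exact G.map_one θ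
  | succ b ih =>
    rw [aProd_succ, aProd_succ]
    split_ifs
    · rw [G.map_mul, ih]
    · exact G.map_one θ

theorem map_dProd {m n : ℕ} (θ : Fin (m+1) →o Fin (n+1)) (f : ℕ → G.obj n) (a b : ℕ) :
    G.map θ (dProd f a b) = dProd (fun j => G.map θ (f j)) a b := by
  induction b with
  | zero => exact G.map_one θ
  | succ b ih =>
    rw [dProd_succ, dProd_succ]
    split_ifs
    · rw [G.map_mul, ih]
    · exact G.map_one θ

end SGrp

end Paper
namespace Paper

/-! ### order homs -/

/-- operator of `d_j ⋯ d_{i+1} s_i ⋯ s_{j-1}` on level `N`. -/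
def etaOH (i j N : ℕ) : Fin (N+1) →o Fin (N+1) where
  toFun p := ⟨min (if (p:ℕ) ≤ i then (p:ℕ) else if (p:ℕ) ≤ j then i else (p:ℕ)) N,
    Nat.lt_succ_of_le (Nat.min_le_right _ _)⟩
  monotone' := by
    intro a b hab
    have h : (a:ℕ) ≤ (b:ℕ) := hab
    simp only [Fin.mk_le_mk]
    split_ifs <;> omega

/-- operator of `d_j ⋯ d_{i+1} s_i ⋯ s_{n-1} : G_j → G_n`. -/
def tauOH (i N j : ℕ) : Fin (N+1) →o Fin (j+1) where
  toFun p := ⟨min (min (p:ℕ) i) j, Nat.lt_succ_of_le (Nat.min_le_right _ _)⟩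
  monotone' := by
    intro a b hab
    have h : (a:ℕ) ≤ (b:ℕ) := hab
    simp only [Fin.mk_le_mk]
    omega

/-- operator of `d_{i+c} ⋯ d_{i+1}` on level `N`. -/
def deltaC (i c N : ℕ) : Fin (N-c+1) →o Fin (N+1) where
  toFun p := ⟨min (if (p:ℕ) ≤ i then (p:ℕ) else (p:ℕ)+c) N,
    Nat.lt_succ_of_le (Nat.min_le_right _ _)⟩
  monotone' := by
    intro a b hab
    have h : (a:ℕ) ≤ (b:ℕ) := hab
    simp only [Fin.mk_le_mk]
    split_ifs <;> omega

/-- operator of `s_i s_{i+1} ⋯ s_{i+c-1}` on level `M`. -/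
def sigmaC (i c M : ℕ) : Fin (M+c+1) →o Fin (M+1) where
  toFun p := ⟨min (if (p:ℕ) ≤ i then (p:ℕ) else if (p:ℕ) ≤ i+c then i else (p:ℕ)-c) M,
    Nat.lt_succ_of_le (Nat.min_le_right _ _)⟩
  monotone' := by
    intro a b hab
    have h : (a:ℕ) ≤ (b:ℕ) := hab
    simp only [Fin.mk_le_mk]
    split_ifs <;> omega

/-- cast order hom. -/
def castOH {a b : ℕ} (e : a = b) : Fin (b+1) →o Fin (a+1) where
  toFun := Fin.cast (by rw [e])
  monotone' := fun x y h => h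

@[simp] theorem etaOH_coe (i j N : ℕ) (p : Fin (N+1)) :
    (etaOH i j N p : ℕ) = min (if (p:ℕ) ≤ i then (p:ℕ) else if (p:ℕ) ≤ j then i else (p:ℕ)) N := rfl

@[simp] theorem tauOH_coe (i N j : ℕ) (p : Fin (N+1)) :
    (tauOH i N j p : ℕ) = min (min (p:ℕ) i) j := rfl

@[simp] theorem deltaC_coe (i c N : ℕ) (p : Fin (N-c+1)) :
    (deltaC i c N p : ℕ) = min (if (p:ℕ) ≤ i then (p:ℕ) else (p:ℕ)+c) N := rfl

@[simp] theorem sigmaC_coe (i c M : ℕ) (p : Fin (M+c+1)) :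
    (sigmaC i c M p : ℕ) = min (if (p:ℕ) ≤ i then (p:ℕ) else if (p:ℕ) ≤ i+c then i else (p:ℕ)-c) M := rfl

@[simp] theorem castOH_coe {a b : ℕ} (e : a = b) (p : Fin (b+1)) :
    ((castOH e p : Fin (a+1)) : ℕ) = (p:ℕ) := rfl

@[simp] theorem δOH_coe (k a b : ℕ) (p : Fin (a+1)) :
    (δOH k a b p : ℕ) = min (if (p:ℕ) < k then (p:ℕ) else (p:ℕ)+1) b := rfl

@[simp] theorem σOH_coe (k a b : ℕ) (p : Fin (a+1)) :
    (σOH k a b p : ℕ) = min (if (p:ℕ) ≤ k then (p:ℕ) else (p:ℕ)-1) b := rfl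


theorem ohext {a b : ℕ} {f g : Fin (a+1) →o Fin (b+1)}
    (h : ∀ p : Fin (a+1), ((f p : Fin (b+1)) : ℕ) = ((g p : Fin (b+1)) : ℕ)) : f = g :=
  OrderHom.ext _ _ (funext fun p => Fin.ext (h p))

/-! ### gcast and structural map lemmas -/

namespace SGrp
variable (G : SGrp)

theorem gcast_rfl {a : ℕ} (x : G.obj a) : G.gcast a x = x := by
  simp [SGrp.gcast]

theorem gcast_map {a b c : ℕ} (e : a = b) (φ : Fin (a+1) →o Fin (c+1)) (x : G.obj c) :
    G.gcast b (G.map φ x) = G.map (φ.comp (castOH e)) x := by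
  subst e
  rw [G.gcast_rfl]
  rfl

theorem dcomp_eq : ∀ (c i N : ℕ), i + c ≤ N → ∀ x : G.obj N,
    G.dcomp i c x = G.map (deltaC i c N) x := by
  intro c
  induction c with
  | zero =>
    intro i N h x
    have hd : deltaC i 0 N = OrderHom.id := by
      apply ohext
      intro p
      have := p.isLt
      show min (if (p:ℕ) ≤ i then (p:ℕ) else (p:ℕ)+0) N = (p:ℕ)
      split_ifs <;> omega
    show x = _
    rw [hd, G.map_id]
  | succ c ih =>
    intro i N h x
    show G.face (i+1) (G.dcomp (i+1) c x) = _
    rw [ih (i+1) N (by omega) x]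
    unfold SGrp.face
    rw [G.map_comp]
    congr 1
    apply ohext
    intro p
    have := p.isLt
    show (let q := min (if (p:ℕ) < i+1 then (p:ℕ) else (p:ℕ)+1) (N-c);
      min (if q ≤ i+1 then q else q+c) N) =
      min (if (p:ℕ) ≤ i then (p:ℕ) else (p:ℕ)+(c+1)) N
    simp only
    split_ifs <;> omega

theorem scomp_eq : ∀ (c i M : ℕ), i ≤ M → ∀ x : G.obj M,
    G.scomp i c x = G.map (sigmaC i c M) x := by
  intro c
  induction c with
  | zero =>
    intro i M h x
    have hd : sigmaC i 0 M = OrderHom.id := by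
      apply ohext
      intro p
      have := p.isLt
      show min (if (p:ℕ) ≤ i then (p:ℕ) else if (p:ℕ) ≤ i+0 then i else (p:ℕ)-0) M = (p:ℕ)
      split_ifs <;> omega
    show x = _
    rw [hd, G.map_id]
  | succ c ih =>
    intro i M h x
    show G.deg (i+c) (G.scomp i c x) = _
    rw [ih i M h x]
    unfold SGrp.deg
    rw [G.map_comp]
    congr 1
    apply ohext
    intro p
    have := p.isLt
    show (let q := min (if (p:ℕ) ≤ i+c then (p:ℕ) else (p:ℕ)-1) (M+c);
      min (if q ≤ i then q else if q ≤ i+c then i else q-c) M) =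
      min (if (p:ℕ) ≤ i then (p:ℕ) else if (p:ℕ) ≤ i+(c+1) then i else (p:ℕ)-(c+1)) M
    simp only
    split_ifs <;> omega

theorem ds_eq {N : ℕ} (i j : ℕ) (h1 : i ≤ j) (h2 : j ≤ N) (x : G.obj N) :
    G.ds i j x = G.map (etaOH i j N) x := by
  unfold SGrp.ds
  have hmin : min (j - i) N = j - i := by omega
  rw [hmin, G.dcomp_eq (j-i) i N (by omega) x, G.scomp_eq (j-i) i (N-(j-i)) (by omega),
    G.map_comp, G.gcast_map (by omega : N-(j-i)+(j-i) = N)]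
  congr 1
  apply ohext
  intro p
  have := p.isLt
  show (let q := min (if (p:ℕ) ≤ i then (p:ℕ) else if (p:ℕ) ≤ i+(j-i) then i else (p:ℕ)-(j-i)) (N-(j-i));
    min (if q ≤ i then q else q+(j-i)) N) =
    min (if (p:ℕ) ≤ i then (p:ℕ) else if (p:ℕ) ≤ j then i else (p:ℕ)) N
  simp only
  split_ifs <;> omega

theorem dsTo_eq {j : ℕ} (i n : ℕ) (h1 : i ≤ j) (h2 : i ≤ n) (x : G.obj j) :
    G.dsTo i n x = G.map (tauOH i n j) x := by
  unfold SGrp.dsTo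
  rw [G.dcomp_eq (j-i) i j (by omega) x, G.gcast_map (by omega : j-(j-i) = i),
    G.scomp_eq (n-i) i i (le_refl i), G.map_comp,
    G.gcast_map (by omega : i+(n-i) = n)]
  congr 1
  apply ohext
  intro p
  have := p.isLt
  show (let q := min (if (p:ℕ) ≤ i then (p:ℕ) else if (p:ℕ) ≤ i+(n-i) then i else (p:ℕ)-(n-i)) i;
    min (if q ≤ i then q else q+(j-i)) j) =
    min (min (p:ℕ) i) j
  simp only
  split_ifs <;> omega

end SGrp

end Paper
namespace Paper

@[simp] theorem restrictOH_coe {a b : ℕ} (θ : Fin (a+1) →o Fin (b+1)) (i j : ℕ) (p : Fin (i+1)) :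
    ((restrictOH θ i j) p : ℕ) = min (fApp θ (p:ℕ)) j := rfl

theorem fApp_δOH (k a b x : ℕ) :
    fApp (δOH k a b) x = min (if min x a < k then min x a else min x a + 1) b := rfl

namespace SGrp
variable (G : SGrp)

/-! ### yAux fuel lemmas -/

theorem yAux_succ (n : ℕ) (g : ∀ j : ℕ, G.obj j) (fuel i : ℕ) :
    G.yAux n g (fuel+1) i =
      aProd (fun j => G.ds i j ((G.yAux n g fuel j)⁻¹)) (i+1) n *
      dProd (fun j => G.dsTo i n (g j)) i n := rfl

theorem yAux_stable (n : ℕ) (g : ∀ j : ℕ, G.obj j) :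
    ∀ fuel i, n ≤ i + fuel → G.yAux n g (fuel+1) i = G.yAux n g fuel i := by
  intro fuel
  induction fuel with
  | zero =>
    intro i h
    rw [yAux_succ]
    show _ = (1 : G.obj n)
    rw [aProd_empty _ (by omega), dProd_empty _ (by omega), one_mul]
  | succ fuel ih =>
    intro i h
    rw [yAux_succ, yAux_succ]
    congr 1
    apply aProd_congr
    intro j hj1 hj2
    rw [ih j (by omega)]

theorem yAux_fuel_eq (n : ℕ) (g : ∀ j : ℕ, G.obj j) {f1 f2 i : ℕ}
    (h1 : n ≤ i + f1) (h2 : n ≤ i + f2) : G.yAux n g f1 i = G.yAux n g f2 i := by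
  have key : ∀ d f i', n ≤ i' + f → G.yAux n g (f+d) i' = G.yAux n g f i' := by
    intro d
    induction d with
    | zero => intro f i' _; rfl
    | succ d ih =>
      intro f i' h
      rw [show f + (d+1) = (f+d)+1 from rfl, G.yAux_stable n g (f+d) i' (by omega), ih f i' h]
  rcases le_total f1 f2 with h | h
  · obtain ⟨d, rfl⟩ := Nat.le.dest h
    exact (key d f1 i h1).symm
  · obtain ⟨d, rfl⟩ := Nat.le.dest h
    exact key d f2 i h2

theorem y_unfold (n : ℕ) (g : ∀ j : ℕ, G.obj j) (i : ℕ) (hi : i < n) :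
    G.yAux n g n i =
      aProd (fun j => G.ds i j ((G.yAux n g n j)⁻¹)) (i+1) n *
      dProd (fun j => G.dsTo i n (g j)) i n := by
  rw [G.yAux_fuel_eq n g (by omega : n ≤ i + n) (by omega : n ≤ i + (n+1)), yAux_succ]

end SGrp

/-! ### composite order-hom identities -/

section Identities
variable {m k : ℕ}

theorem OHI1 {i j : ℕ} (hki : k ≤ i) (hij : i < j) (hjm : j < m) :
    (δOH k m (m+1)).comp (etaOH i j m) = (etaOH (i+1) (j+1) (m+1)).comp (δOH k m (m+1)) := by
  apply ohext
  intro p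
  have := p.isLt
  simp only [OrderHom.comp_coe, Function.comp_apply, etaOH_coe, δOH_coe]
  split_ifs <;> omega

theorem OHI2 {i j : ℕ} (hik : i < k) (hkj : k ≤ j+1) (hij : i < j) (hjm : j < m) :
    (δOH k m (m+1)).comp (etaOH i j m) = (etaOH i (j+1) (m+1)).comp (δOH k m (m+1)) := by
  apply ohext
  intro p
  have := p.isLt
  simp only [OrderHom.comp_coe, Function.comp_apply, etaOH_coe, δOH_coe]
  split_ifs <;> omega

theorem OHI3 {i j : ℕ} (hij : i < j) (hjk : j < k) (hjm : j < m) :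
    (δOH k m (m+1)).comp (etaOH i j m) = (etaOH i j (m+1)).comp (δOH k m (m+1)) := by
  apply ohext
  intro p
  have := p.isLt
  simp only [OrderHom.comp_coe, Function.comp_apply, etaOH_coe, δOH_coe]
  split_ifs <;> omega

theorem OHI4 {i : ℕ} (hik : i+1 = k) (hkm : k ≤ m+1) :
    (etaOH i (i+1) (m+1)).comp (δOH k m (m+1)) = δOH k m (m+1) := by
  apply ohext
  intro p
  have := p.isLt
  simp only [OrderHom.comp_coe, Function.comp_apply, etaOH_coe, δOH_coe]
  split_ifs <;> omega

theorem OHT1 {i j : ℕ} (hik : i < k) (hkj : k ≤ j+1) (hij : i ≤ j) (hjm : j < m) :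
    (restrictOH (δOH k m (m+1)) j (j+1)).comp (tauOH i m j) =
      (tauOH i (m+1) (j+1)).comp (δOH k m (m+1)) := by
  apply ohext
  intro p
  have := p.isLt
  simp only [OrderHom.comp_coe, Function.comp_apply, tauOH_coe, δOH_coe, restrictOH_coe, fApp_δOH]
  split_ifs <;> omega

theorem OHT1' {i j : ℕ} (hki : k ≤ i) (hij : i ≤ j) (hjm : j < m) :
    (restrictOH (δOH k m (m+1)) j (j+1)).comp (tauOH i m j) =
      (tauOH (i+1) (m+1) (j+1)).comp (δOH k m (m+1)) := by
  apply ohext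
  intro p
  have := p.isLt
  simp only [OrderHom.comp_coe, Function.comp_apply, tauOH_coe, δOH_coe, restrictOH_coe, fApp_δOH]
  split_ifs <;> omega

theorem OHT4 {i j : ℕ} (hij : i ≤ j) (hjk : j < k) (hjm : j < m) :
    (restrictOH (δOH k m (m+1)) j j).comp (tauOH i m j) =
      (tauOH i (m+1) j).comp (δOH k m (m+1)) := by
  apply ohext
  intro p
  have := p.isLt
  simp only [OrderHom.comp_coe, Function.comp_apply, tauOH_coe, δOH_coe, restrictOH_coe, fApp_δOH]
  split_ifs <;> omega

theorem OHX {i : ℕ} (him : i < m) :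
    (tauOH m (m+1) m).comp ((etaOH i m (m+1)).comp (δOH (m+1) m (m+1))) =
      (tauOH i (m+1) m).comp (δOH (m+1) m (m+1)) := by
  apply ohext
  intro p
  have := p.isLt
  simp only [OrderHom.comp_coe, Function.comp_apply, tauOH_coe, δOH_coe, etaOH_coe]
  split_ifs <;> omega

end Identities

end Paper
namespace Paper
namespace SGrp
variable (G : SGrp) {m k : ℕ}

/-! ### group-level factor lemmas -/

theorem GL1 {i j : ℕ} (hki : k ≤ i) (hij : i < j) (hjm : j < m) (w : G.obj (m+1)) :
    G.ds i j ((G.map (δOH k m (m+1)) w)⁻¹) =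
      G.map (δOH k m (m+1)) (G.ds (i+1) (j+1) (w⁻¹)) := by
  rw [G.ds_eq i j (by omega) (by omega), G.map_inv, G.map_comp, OHI1 hki hij hjm,
    ← G.map_comp, ← G.map_inv, ← G.map_inv,
    ← G.ds_eq (i+1) (j+1) (by omega) (by omega)]

theorem GL2 {i j : ℕ} (hik : i < k) (hkj : k ≤ j+1) (hij : i < j) (hjm : j < m)
    (w : G.obj (m+1)) :
    G.ds i j ((G.map (δOH k m (m+1)) w)⁻¹) =
      G.map (δOH k m (m+1)) (G.ds i (j+1) (w⁻¹)) := by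
  rw [G.ds_eq i j (by omega) (by omega), G.map_inv, G.map_comp, OHI2 hik hkj hij hjm,
    ← G.map_comp, ← G.map_inv, ← G.map_inv,
    ← G.ds_eq i (j+1) (by omega) (by omega)]

theorem GL3 {i j : ℕ} (hij : i < j) (hjk : j < k) (hjm : j < m) (w : G.obj (m+1)) :
    G.ds i j ((G.map (δOH k m (m+1)) w)⁻¹) =
      G.map (δOH k m (m+1)) (G.ds i j (w⁻¹)) := by
  rw [G.ds_eq i j (by omega) (by omega), G.map_inv, G.map_comp, OHI3 hij hjk hjm,
    ← G.map_comp, ← G.map_inv, ← G.map_inv,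
    ← G.ds_eq i j (by omega) (show j ≤ m+1 by omega)]

/-- the cancellation `(x d_k) ⋅ ((x⁻¹ d_k s_{k-1}) d_k) = 1`. -/
theorem GL4 {i : ℕ} (hik : i+1 = k) (him : i < m) (w : G.obj (m+1)) :
    G.map (δOH k m (m+1)) w * G.map (δOH k m (m+1)) (G.ds i (i+1) (w⁻¹)) = 1 := by
  rw [G.ds_eq i (i+1) (by omega) (by omega), G.map_inv, G.map_inv, G.map_comp,
    OHI4 hik (by omega), mul_inv_cancel]

theorem GL5 {i K : ℕ} (hiK : i < K) (hKk : K+1 = k) (hKm : K < m)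
    (w1 w0 : G.obj (m+1)) :
    G.ds i K ((G.map (δOH k m (m+1)) w1 * G.map (δOH k m (m+1)) w0)⁻¹) =
      G.map (δOH k m (m+1)) (G.ds i K (w0⁻¹) * G.ds i (K+1) (w1⁻¹)) := by
  rw [mul_inv_rev, G.ds_eq i K (by omega) (by omega), G.map_mul,
    ← G.ds_eq i K (by omega) (by omega), G.GL3 hiK (by omega) hKm w0,
    ← G.ds_eq i K (by omega) (by omega), G.GL2 (by omega) (by omega) hiK hKm w1,
    ← G.map_mul]

theorem GT1 {i j : ℕ} (hik : i < k) (hkj : k ≤ j+1) (hij : i ≤ j) (hjm : j < m)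
    (u : G.obj (j+1)) :
    G.dsTo i m (G.map (restrictOH (δOH k m (m+1)) j (j+1)) u) =
      G.map (δOH k m (m+1)) (G.dsTo i (m+1) u) := by
  rw [G.dsTo_eq i m hij (by omega), G.map_comp, OHT1 hik hkj hij hjm, ← G.map_comp,
    ← G.dsTo_eq i (m+1) (by omega) (by omega)]

theorem GT1' {i j : ℕ} (hki : k ≤ i) (hij : i ≤ j) (hjm : j < m) (u : G.obj (j+1)) :
    G.dsTo i m (G.map (restrictOH (δOH k m (m+1)) j (j+1)) u) =
      G.map (δOH k m (m+1)) (G.dsTo (i+1) (m+1) u) := by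
  rw [G.dsTo_eq i m hij (by omega), G.map_comp, OHT1' hki hij hjm, ← G.map_comp,
    ← G.dsTo_eq (i+1) (m+1) (by omega) (by omega)]

theorem GT4 {i j : ℕ} (hij : i ≤ j) (hjk : j < k) (hjm : j < m) (u : G.obj j) :
    G.dsTo i m (G.map (restrictOH (δOH k m (m+1)) j j) u) =
      G.map (δOH k m (m+1)) (G.dsTo i (m+1) u) := by
  rw [G.dsTo_eq i m hij (by omega), G.map_comp, OHT4 hij hjk hjm, ← G.map_comp,
    ← G.dsTo_eq i (m+1) hij (by omega)]

theorem GT6 {i K : ℕ} (hiK : i ≤ K) (hKk : K+1 = k) (hKm : K < m)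
    (u1 : G.obj (K+1)) (u0 : G.obj K) :
    G.dsTo i m (G.map (restrictOH (δOH k m (m+1)) K (K+1)) u1 *
        G.map (restrictOH (δOH k m (m+1)) K K) u0) =
      G.map (δOH k m (m+1)) (G.dsTo i (m+1) u1 * G.dsTo i (m+1) u0) := by
  rw [G.dsTo_eq i m hiK (by omega), G.map_mul,
    ← G.dsTo_eq i m hiK (by omega), ← G.dsTo_eq i m hiK (by omega),
    G.GT1 (by omega) (by omega) hiK hKm u1, G.GT4 hiK (by omega) hKm u0, ← G.map_mul]

theorem GX {i : ℕ} (him : i < m) (u : G.obj m) :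
    G.map (δOH (m+1) m (m+1)) (G.ds i m ((G.dsTo m (m+1) u)⁻¹)) =
      (G.map (δOH (m+1) m (m+1)) (G.dsTo i (m+1) u))⁻¹ := by
  rw [G.dsTo_eq m (m+1) (le_refl m) (by omega), G.ds_eq i m (by omega) (by omega),
    G.map_inv, G.map_inv, G.map_comp, G.map_comp, OHX him, ← G.map_comp,
    ← G.dsTo_eq i (m+1) (by omega) (by omega)]

/-! ### components of the Wbar face -/

theorem gE_lt {n : ℕ} (g : G.WbarN n) {j : ℕ} (hj : j < n) :
    G.gE g j = g ⟨j, hj⟩ := dif_pos hj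

theorem gE_wbar_lt (g : G.WbarN (m+1)) {j : ℕ} (hj : j < m) (hjk : j+1 < k) :
    G.gE (G.wbarMap (δOH k m (m+1)) g) j =
      G.map (restrictOH (δOH k m (m+1)) j j) (G.gE g j) := by
  rw [G.gE_lt (G.wbarMap (δOH k m (m+1)) g) hj]
  show dProd (fun l => G.map (restrictOH (δOH k m (m+1)) j l) (G.gE g l))
      (((δOH k m (m+1)) (Fin.castSucc ⟨j,hj⟩) : Fin (m+1+1)) : ℕ)
      (((δOH k m (m+1)) (Fin.succ ⟨j,hj⟩) : Fin (m+1+1)) : ℕ) = _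
  have ha : (((δOH k m (m+1)) (Fin.castSucc ⟨j,hj⟩) : Fin (m+1+1)) : ℕ) = j := by
    show min (if j < k then j else j+1) (m+1) = j
    split_ifs <;> omega
  have hb : (((δOH k m (m+1)) (Fin.succ ⟨j,hj⟩) : Fin (m+1+1)) : ℕ) = j+1 := by
    show min (if j+1 < k then j+1 else j+1+1) (m+1) = j+1
    split_ifs <;> omega
  rw [ha, hb, dProd_single]

theorem gE_wbar_mid (g : G.WbarN (m+1)) {j : ℕ} (hj : j < m) (hjk : j+1 = k) :
    G.gE (G.wbarMap (δOH k m (m+1)) g) j =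
      G.map (restrictOH (δOH k m (m+1)) j (j+1)) (G.gE g (j+1)) *
      G.map (restrictOH (δOH k m (m+1)) j j) (G.gE g j) := by
  rw [G.gE_lt (G.wbarMap (δOH k m (m+1)) g) hj]
  show dProd (fun l => G.map (restrictOH (δOH k m (m+1)) j l) (G.gE g l))
      (((δOH k m (m+1)) (Fin.castSucc ⟨j,hj⟩) : Fin (m+1+1)) : ℕ)
      (((δOH k m (m+1)) (Fin.succ ⟨j,hj⟩) : Fin (m+1+1)) : ℕ) = _
  have ha : (((δOH k m (m+1)) (Fin.castSucc ⟨j,hj⟩) : Fin (m+1+1)) : ℕ) = j := by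
    show min (if j < k then j else j+1) (m+1) = j
    split_ifs <;> omega
  have hb : (((δOH k m (m+1)) (Fin.succ ⟨j,hj⟩) : Fin (m+1+1)) : ℕ) = j+1+1 := by
    show min (if j+1 < k then j+1 else j+1+1) (m+1) = j+1+1
    split_ifs <;> omega
  rw [ha, hb, dProd_pair]

theorem gE_wbar_ge (g : G.WbarN (m+1)) {j : ℕ} (hj : j < m) (hjk : k ≤ j) :
    G.gE (G.wbarMap (δOH k m (m+1)) g) j =
      G.map (restrictOH (δOH k m (m+1)) j (j+1)) (G.gE g (j+1)) := by
  rw [G.gE_lt (G.wbarMap (δOH k m (m+1)) g) hj]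
  show dProd (fun l => G.map (restrictOH (δOH k m (m+1)) j l) (G.gE g l))
      (((δOH k m (m+1)) (Fin.castSucc ⟨j,hj⟩) : Fin (m+1+1)) : ℕ)
      (((δOH k m (m+1)) (Fin.succ ⟨j,hj⟩) : Fin (m+1+1)) : ℕ) = _
  have ha : (((δOH k m (m+1)) (Fin.castSucc ⟨j,hj⟩) : Fin (m+1+1)) : ℕ) = j+1 := by
    show min (if j < k then j else j+1) (m+1) = j+1
    split_ifs <;> omega
  have hb : (((δOH k m (m+1)) (Fin.succ ⟨j,hj⟩) : Fin (m+1+1)) : ℕ) = j+1+1 := by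
    show min (if j+1 < k then j+1 else j+1+1) (m+1) = j+1+1
    split_ifs <;> omega
  rw [ha, hb, dProd_single]

end SGrp
end Paper
namespace Paper

theorem cancel_aux {γ : Type*} [Group γ] {y f : γ} (h : y * f = 1) (a bc : γ) :
    a * bc = y * (f * a * bc) := by
  rw [eq_inv_of_mul_eq_one_left h, mul_assoc f a bc, inv_mul_cancel_left]

namespace SGrp
variable (G : SGrp)

theorem xE_lt {n : ℕ} (x : Fin n → G.obj n) {j : ℕ} (hj : j < n) :
    G.xE x j = x ⟨j, hj⟩ := dif_pos hj

theorem key (m k : ℕ) (hk : k ≤ m+1) (g : G.WbarN (m+1)) :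
    ∀ fuel i, m ≤ i + fuel → i < m →
      G.yAux m (G.gE (G.wbarMap (δOH k m (m+1)) g)) fuel i =
        if k ≤ i then
          G.map (δOH k m (m+1)) (G.yAux (m+1) (G.gE g) (m+1) (i+1))
        else if i+1 = k then
          G.map (δOH k m (m+1)) (G.yAux (m+1) (G.gE g) (m+1) (i+1)) *
          G.map (δOH k m (m+1)) (G.yAux (m+1) (G.gE g) (m+1) i)
        else G.map (δOH k m (m+1)) (G.yAux (m+1) (G.gE g) (m+1) i) := by
  intro fuel
  induction fuel with
  | zero => intro i h1 h2; omega
  | succ fuel ih =>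
    intro i hfi him
    rw [G.yAux_succ]
    by_cases hik : k ≤ i
    · -- CASE A : k ≤ i
      rw [if_pos hik]
      have hfA : ∀ j, i+1 ≤ j → j < m →
          G.ds i j ((G.yAux m (G.gE (G.wbarMap (δOH k m (m+1)) g)) fuel j)⁻¹) =
          G.map (δOH k m (m+1))
            (G.ds (i+1) (j+1) ((G.yAux (m+1) (G.gE g) (m+1) (j+1))⁻¹)) := by
        intro j hj1 hj2
        rw [ih j (by omega) hj2, if_pos (show k ≤ j by omega)]
        exact G.GL1 hik (by omega) hj2 _
      have hA : aProd (fun j => G.ds i j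
            ((G.yAux m (G.gE (G.wbarMap (δOH k m (m+1)) g)) fuel j)⁻¹)) (i+1) m =
          G.map (δOH k m (m+1))
            (aProd (fun j => G.ds (i+1) j ((G.yAux (m+1) (G.gE g) (m+1) j)⁻¹))
              (i+1+1) (m+1)) := by
        rw [G.map_aProd, ← aProd_shift]
        exact aProd_congr hfA
      have hfB : ∀ j, i ≤ j → j < m →
          G.dsTo i m (G.gE (G.wbarMap (δOH k m (m+1)) g) j) =
          G.map (δOH k m (m+1)) (G.dsTo (i+1) (m+1) (G.gE g (j+1))) := by
        intro j hj1 hj2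
        rw [G.gE_wbar_ge g hj2 (by omega)]
        exact G.GT1' hik hj1 hj2 _
      have hB : dProd (fun j => G.dsTo i m (G.gE (G.wbarMap (δOH k m (m+1)) g) j)) i m =
          G.map (δOH k m (m+1))
            (dProd (fun j => G.dsTo (i+1) (m+1) (G.gE g j)) (i+1) (m+1)) := by
        rw [G.map_dProd, ← dProd_shift]
        exact dProd_congr hfB
      rw [hA, hB, ← G.map_mul, ← G.y_unfold (m+1) (G.gE g) (i+1) (by omega)]
    · rw [if_neg hik]
      by_cases hik1 : i+1 = k
      · -- CASE B : i+1 = k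
        rw [if_pos hik1]
        have hfA : ∀ j, i+1 ≤ j → j < m →
            G.ds i j ((G.yAux m (G.gE (G.wbarMap (δOH k m (m+1)) g)) fuel j)⁻¹) =
            G.map (δOH k m (m+1))
              (G.ds i (j+1) ((G.yAux (m+1) (G.gE g) (m+1) (j+1))⁻¹)) := by
          intro j hj1 hj2
          rw [ih j (by omega) hj2, if_pos (show k ≤ j by omega)]
          exact G.GL2 (by omega) (by omega) (by omega) hj2 _
        have hA : aProd (fun j => G.ds i j
              ((G.yAux m (G.gE (G.wbarMap (δOH k m (m+1)) g)) fuel j)⁻¹)) (i+1) m =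
            G.map (δOH k m (m+1))
              (aProd (fun j => G.ds i j ((G.yAux (m+1) (G.gE g) (m+1) j)⁻¹))
                (i+1+1) (m+1)) := by
          rw [G.map_aProd, ← aProd_shift]
          exact aProd_congr hfA
        have hfB : ∀ j, i+1 ≤ j → j < m →
            G.dsTo i m (G.gE (G.wbarMap (δOH k m (m+1)) g) j) =
            G.map (δOH k m (m+1)) (G.dsTo i (m+1) (G.gE g (j+1))) := by
          intro j hj1 hj2
          rw [G.gE_wbar_ge g hj2 (by omega)]
          exact G.GT1 (by omega) (by omega) (by omega) hj2 _
        have hB1 : dProd (fun j => G.dsTo i m (G.gE (G.wbarMap (δOH k m (m+1)) g) j))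
              (i+1) m =
            G.map (δOH k m (m+1))
              (dProd (fun j => G.dsTo i (m+1) (G.gE g j)) (i+1+1) (m+1)) := by
          rw [G.map_dProd, ← dProd_shift]
          exact dProd_congr hfB
        have hB0 : G.dsTo i m (G.gE (G.wbarMap (δOH k m (m+1)) g) i) =
            G.map (δOH k m (m+1))
              (G.dsTo i (m+1) (G.gE g (i+1)) * G.dsTo i (m+1) (G.gE g i)) := by
          rw [G.gE_wbar_mid g him hik1]
          exact G.GT6 (le_refl i) hik1 him _ _
        rw [dProd_split _ (show i ≤ i+1 by omega) (show i+1 ≤ m by omega),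
          dProd_single, hB0, hA, hB1,
          G.y_unfold (m+1) (G.gE g) i (by omega),
          aProd_cons _ (show i+1 < m+1 by omega),
          dProd_split (fun j => G.dsTo i (m+1) (G.gE g j))
            (show i ≤ i+1+1 by omega) (show i+1+1 ≤ m+1 by omega),
          dProd_pair, G.map_mul, G.map_mul, G.map_mul, G.map_mul, G.map_mul]
        exact cancel_aux (G.GL4 hik1 him _) _ _
      · -- CASE C : i+1 < k
        rw [if_neg hik1]
        by_cases hkm : k ≤ m
        · -- C1 : k ≤ m
          obtain ⟨K, rfl⟩ : ∃ K, k = K+1 := ⟨k-1, by omega⟩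
          have hiK : i < K := by omega
          have hKm : K < m := by omega
          have hfA1 : ∀ j, i+1 ≤ j → j < K →
              G.ds i j ((G.yAux m (G.gE (G.wbarMap (δOH (K+1) m (m+1)) g)) fuel j)⁻¹) =
              G.map (δOH (K+1) m (m+1))
                (G.ds i j ((G.yAux (m+1) (G.gE g) (m+1) j)⁻¹)) := by
            intro j hj1 hj2
            rw [ih j (by omega) (by omega), if_neg (show ¬ (K+1 ≤ j) by omega),
              if_neg (show ¬ (j+1 = K+1) by omega)]
            exact G.GL3 (by omega) (by omega) (by omega) _
          have hA1 : aProd (fun j => G.ds i j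
                ((G.yAux m (G.gE (G.wbarMap (δOH (K+1) m (m+1)) g)) fuel j)⁻¹)) (i+1) K =
              G.map (δOH (K+1) m (m+1))
                (aProd (fun j => G.ds i j ((G.yAux (m+1) (G.gE g) (m+1) j)⁻¹)) (i+1) K) := by
            rw [G.map_aProd]
            exact aProd_congr hfA1
          have hA2 : G.ds i K
                ((G.yAux m (G.gE (G.wbarMap (δOH (K+1) m (m+1)) g)) fuel K)⁻¹) =
              G.map (δOH (K+1) m (m+1))
                (G.ds i K ((G.yAux (m+1) (G.gE g) (m+1) K)⁻¹) *
                 G.ds i (K+1) ((G.yAux (m+1) (G.gE g) (m+1) (K+1))⁻¹)) := by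
            rw [ih K (by omega) hKm, if_neg (show ¬ (K+1 ≤ K) by omega),
              if_pos (rfl : K+1 = K+1)]
            exact G.GL5 hiK rfl hKm _ _
          have hfA3 : ∀ j, K+1 ≤ j → j < m →
              G.ds i j ((G.yAux m (G.gE (G.wbarMap (δOH (K+1) m (m+1)) g)) fuel j)⁻¹) =
              G.map (δOH (K+1) m (m+1))
                (G.ds i (j+1) ((G.yAux (m+1) (G.gE g) (m+1) (j+1))⁻¹)) := by
            intro j hj1 hj2
            rw [ih j (by omega) hj2, if_pos (show K+1 ≤ j by omega)]
            exact G.GL2 (by omega) (by omega) (by omega) hj2 _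
          have hA3 : aProd (fun j => G.ds i j
                ((G.yAux m (G.gE (G.wbarMap (δOH (K+1) m (m+1)) g)) fuel j)⁻¹)) (K+1) m =
              G.map (δOH (K+1) m (m+1))
                (aProd (fun j => G.ds i j ((G.yAux (m+1) (G.gE g) (m+1) j)⁻¹))
                  (K+1+1) (m+1)) := by
            rw [G.map_aProd, ← aProd_shift]
            exact aProd_congr hfA3
          have hA : aProd (fun j => G.ds i j
                ((G.yAux m (G.gE (G.wbarMap (δOH (K+1) m (m+1)) g)) fuel j)⁻¹)) (i+1) m =
              G.map (δOH (K+1) m (m+1))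
                (aProd (fun j => G.ds i j ((G.yAux (m+1) (G.gE g) (m+1) j)⁻¹))
                  (i+1) (m+1)) := by
            rw [aProd_split _ (show i+1 ≤ K by omega) (show K ≤ m by omega),
              aProd_cons _ (show K < m by omega), hA1, hA2, hA3,
              aProd_split (fun j => G.ds i j ((G.yAux (m+1) (G.gE g) (m+1) j)⁻¹))
                (show i+1 ≤ K by omega) (show K ≤ m+1 by omega),
              aProd_split (fun j => G.ds i j ((G.yAux (m+1) (G.gE g) (m+1) j)⁻¹))
                (show K ≤ K+1+1 by omega) (show K+1+1 ≤ m+1 by omega),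
              aProd_pair, G.map_mul, G.map_mul, G.map_mul, G.map_mul]
          have hfB1 : ∀ j, i ≤ j → j < K →
              G.dsTo i m (G.gE (G.wbarMap (δOH (K+1) m (m+1)) g) j) =
              G.map (δOH (K+1) m (m+1)) (G.dsTo i (m+1) (G.gE g j)) := by
            intro j hj1 hj2
            rw [G.gE_wbar_lt g (by omega) (by omega)]
            exact G.GT4 hj1 (by omega) (by omega) _
          have hB1 : dProd (fun j => G.dsTo i m
                (G.gE (G.wbarMap (δOH (K+1) m (m+1)) g) j)) i K =
              G.map (δOH (K+1) m (m+1))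
                (dProd (fun j => G.dsTo i (m+1) (G.gE g j)) i K) := by
            rw [G.map_dProd]
            exact dProd_congr hfB1
          have hB2 : G.dsTo i m (G.gE (G.wbarMap (δOH (K+1) m (m+1)) g) K) =
              G.map (δOH (K+1) m (m+1))
                (G.dsTo i (m+1) (G.gE g (K+1)) * G.dsTo i (m+1) (G.gE g K)) := by
            rw [G.gE_wbar_mid g hKm rfl]
            exact G.GT6 (by omega) rfl hKm _ _
          have hfB3 : ∀ j, K+1 ≤ j → j < m →
              G.dsTo i m (G.gE (G.wbarMap (δOH (K+1) m (m+1)) g) j) =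
              G.map (δOH (K+1) m (m+1)) (G.dsTo i (m+1) (G.gE g (j+1))) := by
            intro j hj1 hj2
            rw [G.gE_wbar_ge g hj2 (by omega)]
            exact G.GT1 (by omega) (by omega) (by omega) hj2 _
          have hB3 : dProd (fun j => G.dsTo i m
                (G.gE (G.wbarMap (δOH (K+1) m (m+1)) g) j)) (K+1) m =
              G.map (δOH (K+1) m (m+1))
                (dProd (fun j => G.dsTo i (m+1) (G.gE g j)) (K+1+1) (m+1)) := by
            rw [G.map_dProd, ← dProd_shift]
            exact dProd_congr hfB3
          have hB : dProd (fun j => G.dsTo i m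
                (G.gE (G.wbarMap (δOH (K+1) m (m+1)) g) j)) i m =
              G.map (δOH (K+1) m (m+1))
                (dProd (fun j => G.dsTo i (m+1) (G.gE g j)) i (m+1)) := by
            rw [dProd_split _ (show i ≤ K by omega) (show K ≤ m by omega),
              dProd_split _ (show K ≤ K+1 by omega) (show K+1 ≤ m by omega),
              dProd_single, hB1, hB2, hB3,
              dProd_split (fun j => G.dsTo i (m+1) (G.gE g j))
                (show i ≤ K by omega) (show K ≤ m+1 by omega),
              dProd_split (fun j => G.dsTo i (m+1) (G.gE g j))
                (show K ≤ K+1+1 by omega) (show K+1+1 ≤ m+1 by omega),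
              dProd_pair, G.map_mul, G.map_mul, G.map_mul, G.map_mul]
          rw [hA, hB, ← G.map_mul, ← G.y_unfold (m+1) (G.gE g) i (by omega)]
        · -- C2 : k = m+1
          have hkm1 : k = m+1 := by omega
          subst hkm1
          have hfA : ∀ j, i+1 ≤ j → j < m →
              G.ds i j ((G.yAux m (G.gE (G.wbarMap (δOH (m+1) m (m+1)) g)) fuel j)⁻¹) =
              G.map (δOH (m+1) m (m+1))
                (G.ds i j ((G.yAux (m+1) (G.gE g) (m+1) j)⁻¹)) := by
            intro j hj1 hj2
            rw [ih j (by omega) hj2, if_neg (show ¬ (m+1 ≤ j) by omega),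
              if_neg (show ¬ (j+1 = m+1) by omega)]
            exact G.GL3 (by omega) (by omega) hj2 _
          have hA : aProd (fun j => G.ds i j
                ((G.yAux m (G.gE (G.wbarMap (δOH (m+1) m (m+1)) g)) fuel j)⁻¹)) (i+1) m =
              G.map (δOH (m+1) m (m+1))
                (aProd (fun j => G.ds i j ((G.yAux (m+1) (G.gE g) (m+1) j)⁻¹)) (i+1) m) := by
            rw [G.map_aProd]
            exact aProd_congr hfA
          have hfB : ∀ j, i ≤ j → j < m →
              G.dsTo i m (G.gE (G.wbarMap (δOH (m+1) m (m+1)) g) j) =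
              G.map (δOH (m+1) m (m+1)) (G.dsTo i (m+1) (G.gE g j)) := by
            intro j hj1 hj2
            rw [G.gE_wbar_lt g hj2 (by omega)]
            exact G.GT4 hj1 (by omega) hj2 _
          have hB : dProd (fun j => G.dsTo i m
                (G.gE (G.wbarMap (δOH (m+1) m (m+1)) g) j)) i m =
              G.map (δOH (m+1) m (m+1))
                (dProd (fun j => G.dsTo i (m+1) (G.gE g j)) i m) := by
            rw [G.map_dProd]
            exact dProd_congr hfB
          have hYm : G.yAux (m+1) (G.gE g) (m+1) m = G.dsTo m (m+1) (G.gE g m) := by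
            rw [G.y_unfold (m+1) (G.gE g) m (by omega),
              aProd_empty _ (le_refl (m+1)), dProd_single, one_mul]
          have hcancel : G.map (δOH (m+1) m (m+1))
                (G.ds i m ((G.yAux (m+1) (G.gE g) (m+1) m)⁻¹)) =
              (G.map (δOH (m+1) m (m+1)) (G.dsTo i (m+1) (G.gE g m)))⁻¹ := by
            rw [hYm]
            exact G.GX him _
          rw [hA, hB, G.y_unfold (m+1) (G.gE g) i (by omega),
            aProd_succ, if_pos (show i+1 ≤ m by omega),
            dProd_succ, if_pos (show i ≤ m by omega),
            G.map_mul, G.map_mul, G.map_mul, hcancel,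
            mul_assoc, inv_mul_cancel_left]

end SGrp
end Paper
open Paper Paper.SGrp in
/-- the maps `(S_G)_n : W̄_n G → Diag_n NG` commute with all face maps. -/
theorem stmt_8 (G : SGrp) (n : ℕ) (hn : 1 ≤ n) (k : ℕ) (hk : k ≤ n) (x : G.WbarN n) :
    G.SGn (n-1) (G.wbarMap (δOH k (n-1) n) x) = G.diagMap (δOH k (n-1) n) (G.SGn n x) := by
  obtain ⟨m, rfl⟩ : ∃ m, n = m + 1 := ⟨n-1, by omega⟩
  show G.SGn m (G.wbarMap (δOH k m (m+1)) x) = G.diagMap (δOH k m (m+1)) (G.SGn (m+1) x)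
  funext i
  have him : (i:ℕ) < m := i.isLt
  show G.yAux m (G.gE (G.wbarMap (δOH k m (m+1)) x)) m (i:ℕ) = _
  rw [G.key m k hk x m (i:ℕ) (by omega) him]
  show _ = dProd (fun j => G.map (δOH k m (m+1)) (G.xE (G.SGn (m+1) x) j))
      (((δOH k m (m+1)) (Fin.castSucc i) : Fin (m+1+1)) : ℕ)
      (((δOH k m (m+1)) (Fin.succ i) : Fin (m+1+1)) : ℕ)
  have hxE : ∀ j (hj : j < m+1),
      G.xE (G.SGn (m+1) x) j = G.yAux (m+1) (G.gE x) (m+1) j := by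
    intro j hj
    rw [G.xE_lt _ hj]
    rfl
  by_cases h1 : k ≤ (i:ℕ)
  · rw [if_pos h1]
    have ha : (((δOH k m (m+1)) (Fin.castSucc i) : Fin (m+1+1)) : ℕ) = (i:ℕ)+1 := by
      show min (if (i:ℕ) < k then (i:ℕ) else (i:ℕ)+1) (m+1) = (i:ℕ)+1
      split_ifs <;> omega
    have hb : (((δOH k m (m+1)) (Fin.succ i) : Fin (m+1+1)) : ℕ) = (i:ℕ)+1+1 := by
      show min (if (i:ℕ)+1 < k then (i:ℕ)+1 else (i:ℕ)+1+1) (m+1) = (i:ℕ)+1+1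
      split_ifs <;> omega
    rw [ha, hb, dProd_single, hxE _ (by omega)]
  · rw [if_neg h1]
    by_cases h2 : (i:ℕ)+1 = k
    · rw [if_pos h2]
      have ha : (((δOH k m (m+1)) (Fin.castSucc i) : Fin (m+1+1)) : ℕ) = (i:ℕ) := by
        show min (if (i:ℕ) < k then (i:ℕ) else (i:ℕ)+1) (m+1) = (i:ℕ)
        split_ifs <;> omega
      have hb : (((δOH k m (m+1)) (Fin.succ i) : Fin (m+1+1)) : ℕ) = (i:ℕ)+1+1 := by
        show min (if (i:ℕ)+1 < k then (i:ℕ)+1 else (i:ℕ)+1+1) (m+1) = (i:ℕ)+1+1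
        split_ifs <;> omega
      rw [ha, hb, dProd_pair, hxE _ (by omega), hxE _ (by omega)]
    · rw [if_neg h2]
      have ha : (((δOH k m (m+1)) (Fin.castSucc i) : Fin (m+1+1)) : ℕ) = (i:ℕ) := by
        show min (if (i:ℕ) < k then (i:ℕ) else (i:ℕ)+1) (m+1) = (i:ℕ)
        split_ifs <;> omega
      have hb : (((δOH k m (m+1)) (Fin.succ i) : Fin (m+1+1)) : ℕ) = (i:ℕ)+1 := by
        show min (if (i:ℕ)+1 < k then (i:ℕ)+1 else (i:ℕ)+1+1) (m+1) = (i:ℕ)+1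
        split_ifs <;> omega
      rw [ha, hb, dProd_single, hxE _ (by omega)]
end
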